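/- arXiv:2301.09972 — 2 statements merged into one kernel-verified Lean document; each statement's English description precedes it below -/
import Mathlib

section
/- Let P ⊂ ℝ^d be a convex polytope of dimension d, let V ⊂ P be a finite set containing every vertex of P, let Γ be a triangulation of P on V, and let x be a point of the interior of P with x ∉ V. Then there exists a triangulation Γ' of P on V ∪ {x} with |Γ'| ≥ |Γ| + d. -/
open Finset

namespace StarSubdiv

variable {d : ℕ} {W : Finset (Fin d → ℝ)}

/-- barycentric coordinate of `y` at `w`, as a function on ambient points (0 off `W`). -/
noncomputable def co (b : AffineBasis (↥W) ℝ (Fin d → ℝ)) (y w : Fin d → ℝ) : ℝ :=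
  if h : w ∈ W then b.coord ⟨w, h⟩ y else 0

variable {b : AffineBasis (↥W) ℝ (Fin d → ℝ)}

lemma co_apply {w : Fin d → ℝ} (h : w ∈ W) (y) : co b y w = b.coord ⟨w, h⟩ y := dif_pos h

lemma sum_co (y) : ∑ w ∈ W, co b y w = 1 := by
  rw [← Finset.sum_coe_sort W (co b y)]
  have h1 : ∀ i : ↥W, co b y ↑i = b.coord i y := fun i => by
    rw [co_apply i.2]
  rw [Finset.sum_congr rfl fun i _ => h1 i]
  exact b.sum_coord_apply_eq_one y

lemma combo_co (hb : ∀ i : ↥W, b i = ↑i) (y) : ∑ w ∈ W, co b y w • w = y := by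
  rw [← Finset.sum_coe_sort W (fun w => co b y w • w)]
  have h1 : ∀ i : ↥W, co b y ↑i • (i : Fin d → ℝ) = b.coord i y • b i := fun i => by
    rw [co_apply i.2, hb]
  rw [Finset.sum_congr rfl fun i _ => h1 i]
  exact b.linear_combination_coord_eq_self y

lemma mem_hull_iff (hb : ∀ i : ↥W, b i = ↑i) (y) :
    y ∈ convexHull ℝ (W : Set (Fin d → ℝ)) ↔ ∀ w ∈ W, 0 ≤ co b y w := by
  have hr : Set.range ⇑b = (W : Set (Fin d → ℝ)) := by
    have : ⇑b = fun i : ↥W => (i : Fin d → ℝ) := funext hb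
    rw [this]
    exact Subtype.range_coe
  rw [← hr, b.convexHull_eq_nonneg_coord]
  constructor
  · intro h w hw; rw [co_apply hw]; exact h _
  · intro h i; have := h ↑i i.2; rwa [co_apply i.2] at this

lemma co_combo (hb : ∀ i : ↥W, b i = ↑i) {U : Finset (Fin d → ℝ)} (hUW : U ⊆ W) {u : (Fin d → ℝ) → ℝ}
    (hsum : ∑ w ∈ U, u w = 1) {y : Fin d → ℝ} (hy : ∑ w ∈ U, u w • w = y)
    {w : Fin d → ℝ} (hw : w ∈ W) :
    co b y w = if w ∈ U then u w else 0 := by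
  classical
  set f : (Fin d → ℝ) → ℝ := fun z => if z ∈ U then u z else 0 with hf
  have hsum' : ∑ j : ↥W, f ↑j = 1 := by
    rw [Finset.sum_coe_sort W f, hf]
    simp only []
    rw [Finset.sum_ite_mem W U u, Finset.inter_eq_right.mpr hUW]
    exact hsum
  have hcombo : (univ : Finset ↥W).affineCombination ℝ b (fun j => f ↑j) = y := by
    rw [Finset.affineCombination_eq_linear_combination _ _ _ hsum']
    have h1 : ∀ j : ↥W, f ↑j • b j = f ↑j • (j : Fin d → ℝ) := fun j => by rw [hb]
    rw [Finset.sum_congr rfl fun j _ => h1 j, Finset.sum_coe_sort W (fun z => f z • z), hf]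
    simp only []
    rw [← hy]
    rw [show (∑ z ∈ W, (if z ∈ U then u z else 0) • z) = ∑ z ∈ W, (if z ∈ U then u z • z else 0) by
      refine Finset.sum_congr rfl fun z _ => ?_; split <;> simp]
    rw [Finset.sum_ite_mem W U (fun z => u z • z), Finset.inter_eq_right.mpr hUW]
  have := b.coord_apply_combination_of_mem (Finset.mem_univ (⟨w, hw⟩ : ↥W)) hsum'
  rw [hcombo] at this
  rw [co_apply hw, this]


lemma mem_hull_weights {U : Finset (Fin d → ℝ)} {y : Fin d → ℝ} :
    y ∈ convexHull ℝ (U : Set (Fin d → ℝ)) ↔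
      ∃ u : (Fin d → ℝ) → ℝ, (∀ w ∈ U, 0 ≤ u w) ∧ ∑ w ∈ U, u w = 1 ∧ ∑ w ∈ U, u w • w = y := by
  rw [Finset.convexHull_eq]
  constructor
  · rintro ⟨u, h0, h1, h2⟩
    refine ⟨u, h0, h1, ?_⟩
    rw [Finset.centerMass_eq_of_sum_1 _ _ h1] at h2
    simpa using h2
  · rintro ⟨u, h0, h1, h2⟩
    refine ⟨u, h0, h1, ?_⟩
    rw [Finset.centerMass_eq_of_sum_1 _ _ h1]
    simpa using h2

lemma mem_hull_subset_iff (hb : ∀ i : ↥W, b i = ↑i) {U : Finset (Fin d → ℝ)} (hUW : U ⊆ W)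
    {y : Fin d → ℝ} :
    y ∈ convexHull ℝ (U : Set (Fin d → ℝ)) ↔
      (∀ w ∈ W, 0 ≤ co b y w) ∧ (∀ w ∈ W, w ∉ U → co b y w = 0) := by
  constructor
  · intro hy
    obtain ⟨u, h0, h1, h2⟩ := mem_hull_weights.mp hy
    have hco : ∀ w ∈ W, co b y w = if w ∈ U then u w else 0 := fun w hw =>
      co_combo hb hUW h1 h2 hw
    constructor
    · intro w hw
      rw [hco w hw]
      split
      · exact h0 _ ‹_›
      · exact le_refl 0
    · intro w hw hwU
      rw [hco w hw, if_neg hwU]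
  · rintro ⟨h0, h1⟩
    refine mem_hull_weights.mpr ⟨co b y, fun w hw => h0 w (hUW hw), ?_, ?_⟩
    · rw [Finset.sum_subset hUW (fun w hw hwU => h1 w hw hwU)]
      exact sum_co y
    · rw [Finset.sum_subset hUW (fun w hw hwU => by rw [h1 w hw hwU, zero_smul])]
      exact combo_co hb y

lemma exists_basis (hW : AffineIndependent ℝ (fun i : ↥W => (i : Fin d → ℝ)))
    (hcard : W.card = d + 1) :
    ∃ b : AffineBasis ↥W ℝ (Fin d → ℝ), ∀ i : ↥W, b i = ↑i := by
  have hspan : affineSpan ℝ (Set.range fun i : ↥W => (i : Fin d → ℝ)) = ⊤ := by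
    rw [hW.affineSpan_eq_top_iff_card_eq_finrank_add_one, Fintype.card_coe, hcard,
      Module.finrank_pi ℝ, Fintype.card_fin]
  exact ⟨⟨_, hW, hspan⟩, fun i => rfl⟩


lemma mem_hull_insert_iff (hb : ∀ i : ↥W, b i = ↑i) {U : Finset (Fin d → ℝ)} (hUW : U ⊆ W)
    {x v : Fin d → ℝ} (hvU : v ∈ U) (hxW : x ∉ W)
    (hx : x ∈ convexHull ℝ (W : Set (Fin d → ℝ))) (hcv : 0 < co b x v) {y : Fin d → ℝ} :
    y ∈ convexHull ℝ ((insert x (U.erase v) : Finset (Fin d → ℝ)) : Set (Fin d → ℝ)) ↔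
      0 ≤ co b y v ∧
      (∀ w ∈ U, w ≠ v → (co b y v / co b x v) * co b x w ≤ co b y w) ∧
      (∀ w ∈ W, w ∉ U → co b y w = (co b y v / co b x v) * co b x w) := by
  classical
  have hvW : v ∈ W := hUW hvU
  have hxE : x ∉ U.erase v := fun h => hxW (hUW (Finset.mem_of_mem_erase h))
  have hEW : U.erase v ⊆ W := (Finset.erase_subset _ _).trans hUW
  have hcvne : co b x v ≠ 0 := ne_of_gt hcv
  constructor
  · intro hy
    obtain ⟨g, g0, g1, g2⟩ := mem_hull_weights.mp hy
    rw [Finset.sum_insert hxE] at g1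
    rw [Finset.sum_insert hxE] at g2
    have hgx : 0 ≤ g x := g0 x (Finset.mem_insert_self _ _)
    set a : (Fin d → ℝ) → ℝ := fun w => g x * co b x w + (if w ∈ U.erase v then g w else 0)
      with ha
    have hasum : ∑ w ∈ W, a w = 1 := by
      rw [Finset.sum_add_distrib, ← Finset.mul_sum, sum_co, mul_one]
      rw [show (∑ w ∈ W, if w ∈ U.erase v then g w else 0) = ∑ w ∈ U.erase v, g w by
        rw [Finset.sum_ite_mem, Finset.inter_eq_right.mpr hEW]]
      exact g1
    have hacomb : ∑ w ∈ W, a w • w = y := by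
      rw [show (∑ w ∈ W, a w • w)
          = ∑ w ∈ W, (g x • (co b x w • w) + (if w ∈ U.erase v then g w • w else 0)) by
        refine Finset.sum_congr rfl fun w _ => ?_
        rw [ha]
        simp only [add_smul, smul_smul]
        congr 1
        split <;> simp]
      rw [Finset.sum_add_distrib, ← Finset.smul_sum, combo_co hb,
        Finset.sum_ite_mem, Finset.inter_eq_right.mpr hEW]
      exact g2
    have hco : ∀ w ∈ W, co b y w = a w := fun w hw => by
      rw [co_combo hb (le_refl W) hasum hacomb hw, if_pos hw]
    have hav : a v = g x * co b x v := by
      rw [ha]; simp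
    have hyv : co b y v = g x * co b x v := by rw [hco v hvW, hav]
    have ht : co b y v / co b x v = g x := by
      rw [hyv, mul_div_assoc, div_self hcvne, mul_one]
    refine ⟨?_, ?_, ?_⟩
    · rw [hyv]; exact mul_nonneg hgx hcv.le
    · intro w hwU hwv
      have hme : w ∈ U.erase v := Finset.mem_erase.mpr ⟨hwv, hwU⟩
      have hgw : 0 ≤ g w := g0 w (Finset.mem_insert_of_mem hme)
      rw [hco w (hUW hwU), ht, ha]
      simp only [if_pos hme]
      linarith
    · intro w hwW hwU
      rw [hco w hwW, ht, ha]
      have : w ∉ U.erase v := fun h => hwU (Finset.mem_of_mem_erase h)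
      simp [this]
  · rintro ⟨h0, h1, h2⟩
    set t : ℝ := co b y v / co b x v with hts
    have ht0 : 0 ≤ t := div_nonneg h0 hcv.le
    have htv : t * co b x v = co b y v := div_mul_cancel₀ _ hcvne
    set f : (Fin d → ℝ) → ℝ := fun z => if z = x then t else co b y z - t * co b x z with hf
    have hfe : ∀ z ∈ U.erase v, f z = co b y z - t * co b x z := fun z hz => by
      rw [hf]; simp only []
      rw [if_neg (fun h : z = x => hxE (h ▸ hz))]
    have hzero : ∀ w ∈ W, w ∉ U.erase v → co b y w - t * co b x w = 0 := by
      intro w hw hwe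
      by_cases hwv : w = v
      · subst hwv
        linarith
      · have hwU : w ∉ U := fun h => hwe (Finset.mem_erase.mpr ⟨hwv, h⟩)
        rw [h2 w hw hwU]
        ring
    have hsub : ∑ w ∈ U.erase v, (co b y w - t * co b x w)
        = ∑ w ∈ W, (co b y w - t * co b x w) :=
      Finset.sum_subset hEW (fun w hw hwe => hzero w hw hwe)
    refine mem_hull_weights.mpr ⟨f, ?_, ?_, ?_⟩
    · intro z hz
      rcases Finset.mem_insert.mp hz with rfl | hz
      · rw [hf]; simp only [if_pos rfl]; exact ht0
      · rw [hfe z hz]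
        have hzU := Finset.mem_of_mem_erase hz
        have hzv := (Finset.mem_erase.mp hz).1
        have := h1 z hzU hzv
        linarith
    · rw [Finset.sum_insert hxE, Finset.sum_congr rfl hfe]
      have hfx : f x = t := if_pos rfl
      rw [hfx, hsub, Finset.sum_sub_distrib, ← Finset.mul_sum, sum_co, sum_co, mul_one]
      ring
    · have hsub2 : ∑ z ∈ U.erase v, (co b y z - t * co b x z) • z
          = ∑ w ∈ W, (co b y w - t * co b x w) • w :=
        Finset.sum_subset hEW (fun w hw hwe => by rw [hzero w hw hwe, zero_smul])
      have hfx : f x = t := if_pos rfl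
      rw [Finset.sum_insert hxE,
        Finset.sum_congr rfl (fun z hz => by rw [hfe z hz] : ∀ z ∈ U.erase v,
          f z • z = (co b y z - t * co b x z) • z), hsub2, hfx]
      rw [show (∑ w ∈ W, (co b y w - t * co b x w) • w)
          = (∑ w ∈ W, co b y w • w) - t • (∑ w ∈ W, co b x w • w) by
        rw [Finset.smul_sum, ← Finset.sum_sub_distrib]
        refine Finset.sum_congr rfl fun w _ => ?_
        rw [sub_smul, smul_smul]]
      rw [combo_co hb, combo_co hb]
      abel


lemma indep_insert (hb : ∀ i : ↥W, b i = ↑i)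
    (hW : AffineIndependent ℝ (fun i : ↥W => (i : Fin d → ℝ)))
    {x v : Fin d → ℝ} (hvW : v ∈ W) (hxW : x ∉ W)
    (hx : x ∈ convexHull ℝ (W : Set (Fin d → ℝ))) (hcv : 0 < co b x v) :
    AffineIndependent ℝ (fun i : ↥(insert x (W.erase v)) => (i : Fin d → ℝ)) := by
  classical
  set N := insert x (W.erase v) with hN
  rw [affineIndependent_iff_of_fintype]
  intro g hg0 hgv
  set G : (Fin d → ℝ) → ℝ := fun z => if h : z ∈ N then g ⟨z, h⟩ else 0 with hG
  have hGg : ∀ i : ↥N, G ↑i = g i := fun i => by rw [hG]; simp only [dif_pos i.2]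
  have hxE : x ∉ W.erase v := fun h => hxW (Finset.mem_of_mem_erase h)
  have hEW : W.erase v ⊆ W := Finset.erase_subset _ _
  have hsum : G x + ∑ w ∈ W.erase v, G w = 0 := by
    rw [← Finset.sum_insert hxE, ← hN, ← Finset.sum_coe_sort N G,
      Finset.sum_congr rfl fun i _ => hGg i]
    exact hg0
  have hcmb : G x • x + ∑ w ∈ W.erase v, G w • w = 0 := by
    have h1 : (∑ z ∈ N, G z • z) = 0 := by
      rw [← Finset.sum_coe_sort N (fun z => G z • z),
        Finset.sum_congr rfl fun (i : ↥N) (_ : i ∈ univ) => by rw [hGg i]]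
      rw [Finset.univ.weightedVSub_eq_linear_combination hg0] at hgv
      exact hgv
    rw [hN, Finset.sum_insert hxE] at h1
    exact h1
  set h : (Fin d → ℝ) → ℝ := fun w => G x * co b x w + (if w ∈ W.erase v then G w else 0)
    with hh
  have hhsum : ∑ w ∈ W, h w = 0 := by
    rw [hh]
    rw [Finset.sum_add_distrib, ← Finset.mul_sum, sum_co, mul_one, Finset.sum_ite_mem,
      Finset.inter_eq_right.mpr hEW]
    exact hsum
  have hhcmb : ∑ w ∈ W, h w • w = 0 := by
    rw [show (∑ w ∈ W, h w • w)
        = ∑ w ∈ W, (G x • (co b x w • w) + (if w ∈ W.erase v then G w • w else 0)) by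
      refine Finset.sum_congr rfl fun w _ => ?_
      rw [hh]
      simp only [add_smul, smul_smul]
      congr 1
      split <;> simp]
    rw [Finset.sum_add_distrib, ← Finset.smul_sum, combo_co hb, Finset.sum_ite_mem,
      Finset.inter_eq_right.mpr hEW]
    exact hcmb
  have hall : ∀ i : ↥W, h ↑i = 0 := by
    have := (affineIndependent_iff_of_fintype ℝ (fun i : ↥W => (i : Fin d → ℝ))).mp hW
      (fun i => h ↑i) ?_ ?_
    · exact this
    · rw [Finset.sum_coe_sort W h]; exact hhsum
    · rw [Finset.univ.weightedVSub_eq_linear_combination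
        (by rw [Finset.sum_coe_sort W h]; exact hhsum)]
      rw [show (∑ i : ↥W, h ↑i • (i : Fin d → ℝ)) = ∑ w ∈ W, h w • w from
        Finset.sum_coe_sort W (fun w => h w • w)]
      exact hhcmb
  have hGx : G x = 0 := by
    have hv := hall ⟨v, hvW⟩
    rw [hh] at hv
    simp only at hv
    rw [if_neg (Finset.notMem_erase v W), add_zero] at hv
    exact (mul_eq_zero.mp hv).resolve_right (ne_of_gt hcv)
  have hGw : ∀ w ∈ W.erase v, G w = 0 := by
    intro w hw
    have := hall ⟨w, hEW hw⟩
    rw [hh] at this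
    simp only [hGx, zero_mul, zero_add, if_pos hw] at this
    exact this
  intro i
  rw [← hGg i]
  rcases Finset.mem_insert.mp i.2 with h' | h'
  · rw [show (i : Fin d → ℝ) = x from h']
    exact hGx
  · exact hGw _ h'


lemma co_pos_mem {y w : Fin d → ℝ} (h : co b y w ≠ 0) : w ∈ W := by
  by_contra hw
  exact h (dif_neg hw)

lemma hullN_subset {x : Fin d → ℝ} (hx : x ∈ convexHull ℝ (W : Set (Fin d → ℝ)))
    {A : Finset (Fin d → ℝ)} (hA : A ⊆ W) :
    convexHull ℝ ((insert x A : Finset (Fin d → ℝ)) : Set (Fin d → ℝ))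
      ⊆ convexHull ℝ (W : Set (Fin d → ℝ)) := by
  apply convexHull_min _ (convex_convexHull ℝ _)
  intro z hz
  rcases Finset.mem_insert.mp (by exact_mod_cast hz) with rfl | hz'
  · exact hx
  · exact subset_convexHull ℝ _ (Finset.mem_coe.mpr (hA hz'))

lemma inter_old_new (hb : ∀ i : ↥W, b i = ↑i) {W₁ U₀ : Finset (Fin d → ℝ)}
    {x v : Fin d → ℝ}
    (hU₀W : U₀ ⊆ W) (hxW : x ∉ W)
    (hx : x ∈ convexHull ℝ (W : Set (Fin d → ℝ)))
    (hcv : 0 < co b x v)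
    (hxn1 : x ∉ convexHull ℝ (W₁ : Set (Fin d → ℝ)))
    (hI : convexHull ℝ (W₁ : Set (Fin d → ℝ)) ∩ convexHull ℝ (W : Set (Fin d → ℝ))
      = convexHull ℝ (U₀ : Set (Fin d → ℝ))) :
    convexHull ℝ (W₁ : Set (Fin d → ℝ))
      ∩ convexHull ℝ ((insert x (W.erase v) : Finset (Fin d → ℝ)) : Set (Fin d → ℝ))
    = convexHull ℝ ((U₀.erase v : Finset (Fin d → ℝ)) : Set (Fin d → ℝ)) := by
  classical
  have hvW : v ∈ W := co_pos_mem (ne_of_gt hcv)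
  have hxnn : ∀ w ∈ W, 0 ≤ co b x w := (mem_hull_iff hb x).mp hx
  -- a positive coordinate of x outside U₀
  have hxU₀ : x ∉ convexHull ℝ (U₀ : Set (Fin d → ℝ)) := by
    intro h
    rw [← hI] at h
    exact hxn1 h.1
  obtain ⟨ws, hwsW, hwsU₀, hwspos⟩ :
      ∃ w ∈ W, w ∉ U₀ ∧ 0 < co b x w := by
    by_contra hcon
    push_neg at hcon
    exact hxU₀ ((mem_hull_subset_iff hb hU₀W).mpr
      ⟨hxnn, fun w hw hwU => le_antisymm (hcon w hw hwU) (hxnn w hw)⟩)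
  apply Set.Subset.antisymm
  · rintro y ⟨hy1, hyN⟩
    have hyW : y ∈ convexHull ℝ (W : Set (Fin d → ℝ)) :=
      hullN_subset hx (Finset.erase_subset _ _) hyN
    have hyU₀ : y ∈ convexHull ℝ (U₀ : Set (Fin d → ℝ)) := by
      rw [← hI]; exact ⟨hy1, hyW⟩
    obtain ⟨h0, hvan⟩ := (mem_hull_subset_iff hb hU₀W).mp hyU₀
    obtain ⟨m0, m1, m2⟩ :=
      (mem_hull_insert_iff hb (le_refl W) hvW hxW hx hcv).mp hyN
    have hyv : co b y v = 0 := by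
      by_cases hwv : ws = v
      · rw [← hwv]; exact hvan ws hwsW hwsU₀
      · have h1 := m1 ws hwsW hwv
        rw [hvan ws hwsW hwsU₀] at h1
        have h2 : 0 ≤ co b y v / co b x v := div_nonneg m0 hcv.le
        have h3 : co b y v / co b x v = 0 := by nlinarith
        have := div_mul_cancel₀ (co b y v) (ne_of_gt hcv)
        rw [h3, zero_mul] at this
        exact this.symm
    refine (mem_hull_subset_iff hb ((Finset.erase_subset _ _).trans hU₀W)).mpr
      ⟨h0, fun w hw hwU => ?_⟩
    by_cases hwv : w = v
    · rw [hwv]; exact hyv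
    · exact hvan w hw (fun h => hwU (Finset.mem_erase.mpr ⟨hwv, h⟩))
  · intro y hy
    have hyU₀ : y ∈ convexHull ℝ (U₀ : Set (Fin d → ℝ)) :=
      convexHull_mono (Finset.coe_subset.mpr (Finset.erase_subset _ _)) hy
    obtain ⟨h0, hvan⟩ :=
      (mem_hull_subset_iff hb ((Finset.erase_subset _ _).trans hU₀W)).mp hy
    have hyv : co b y v = 0 := hvan v hvW (Finset.notMem_erase _ _)
    refine ⟨?_, ?_⟩
    · rw [← hI] at hyU₀; exact hyU₀.1
    · refine (mem_hull_insert_iff hb (le_refl W) hvW hxW hx hcv).mpr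
        ⟨le_of_eq hyv.symm, fun w hw hwv => ?_, fun w hw hwU => absurd hw hwU⟩
      rw [hyv, zero_div, zero_mul]
      exact h0 w hw


lemma inter_new_new {W' U₀ : Finset (Fin d → ℝ)} {b' : AffineBasis (↥W') ℝ (Fin d → ℝ)}
    (hb : ∀ i : ↥W, b i = ↑i) (hb' : ∀ i : ↥W', b' i = ↑i)
    {x v v' : Fin d → ℝ}
    (hU₀W : U₀ ⊆ W) (hU₀W' : U₀ ⊆ W')
    (hI : convexHull ℝ (W : Set (Fin d → ℝ)) ∩ convexHull ℝ (W' : Set (Fin d → ℝ))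
      = convexHull ℝ (U₀ : Set (Fin d → ℝ)))
    (hxW : x ∉ W) (hxW' : x ∉ W')
    (hx : x ∈ convexHull ℝ (W : Set (Fin d → ℝ)))
    (hx' : x ∈ convexHull ℝ (W' : Set (Fin d → ℝ)))
    (hcv : 0 < co b x v) (hcv' : 0 < co b x v')
    (hdv : 0 < co b' x v) (hdv' : 0 < co b' x v') :
    convexHull ℝ ((insert x (W.erase v) : Finset (Fin d → ℝ)) : Set (Fin d → ℝ))
      ∩ convexHull ℝ ((insert x (W'.erase v') : Finset (Fin d → ℝ)) : Set (Fin d → ℝ))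
    = convexHull ℝ
        ((insert x ((U₀.erase v).erase v') : Finset (Fin d → ℝ)) : Set (Fin d → ℝ)) := by
  classical
  have hvW : v ∈ W := co_pos_mem (ne_of_gt hcv)
  have hv'W : v' ∈ W := co_pos_mem (ne_of_gt hcv')
  have hvW' : v ∈ W' := co_pos_mem (ne_of_gt hdv)
  have hv'W' : v' ∈ W' := co_pos_mem (ne_of_gt hdv')
  have hxU₀ : x ∈ convexHull ℝ (U₀ : Set (Fin d → ℝ)) := by rw [← hI]; exact ⟨hx, hx'⟩
  obtain ⟨ux, hux0, hux1, hux2⟩ := mem_hull_weights.mp hxU₀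
  have hcoWx : ∀ w ∈ W, co b x w = if w ∈ U₀ then ux w else 0 := fun w hw =>
    co_combo hb hU₀W hux1 hux2 hw
  have hcoW'x : ∀ w ∈ W', co b' x w = if w ∈ U₀ then ux w else 0 := fun w hw =>
    co_combo hb' hU₀W' hux1 hux2 hw
  have hvU₀ : v ∈ U₀ := by
    by_contra hc
    rw [hcoWx v hvW, if_neg hc] at hcv
    exact lt_irrefl 0 hcv
  have hv'U₀ : v' ∈ U₀ := by
    by_contra hc
    rw [hcoWx v' hv'W, if_neg hc] at hcv'
    exact lt_irrefl 0 hcv'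
  have hsetW : (insert x ((U₀.erase v).erase v') : Finset (Fin d → ℝ))
      ⊆ insert x (W.erase v) := by
    apply Finset.insert_subset_insert
    exact ((Finset.erase_subset _ _).trans (Finset.erase_subset_erase _ hU₀W))
  have hsetW' : (insert x ((U₀.erase v).erase v') : Finset (Fin d → ℝ))
      ⊆ insert x (W'.erase v') := by
    apply Finset.insert_subset_insert
    rw [Finset.erase_right_comm]
    exact ((Finset.erase_subset _ _).trans (Finset.erase_subset_erase _ hU₀W'))
  apply Set.Subset.antisymm
  · rintro y ⟨hyN, hyN'⟩
    have hyW : y ∈ convexHull ℝ (W : Set (Fin d → ℝ)) :=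
      hullN_subset hx (Finset.erase_subset _ _) hyN
    have hyW' : y ∈ convexHull ℝ (W' : Set (Fin d → ℝ)) :=
      hullN_subset hx' (Finset.erase_subset _ _) hyN'
    have hyU₀ : y ∈ convexHull ℝ (U₀ : Set (Fin d → ℝ)) := by rw [← hI]; exact ⟨hyW, hyW'⟩
    obtain ⟨a, ha0, ha1, ha2⟩ := mem_hull_weights.mp hyU₀
    have hcoWy : ∀ w ∈ W, co b y w = if w ∈ U₀ then a w else 0 := fun w hw =>
      co_combo hb hU₀W ha1 ha2 hw
    have hcoW'y : ∀ w ∈ W', co b' y w = if w ∈ U₀ then a w else 0 := fun w hw =>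
      co_combo hb' hU₀W' ha1 ha2 hw
    obtain ⟨m0, m1, m2⟩ :=
      (mem_hull_insert_iff hb (le_refl W) hvW hxW hx hcv).mp hyN
    obtain ⟨n0, n1, n2⟩ :=
      (mem_hull_insert_iff hb' (le_refl W') hv'W' hxW' hx' hdv').mp hyN'
    -- the two "t" parameters agree
    have hcbv : co b x v = ux v := by rw [hcoWx v hvW, if_pos hvU₀]
    have hcbv' : co b x v' = ux v' := by rw [hcoWx v' hv'W, if_pos hv'U₀]
    have hdbv : co b' x v = ux v := by rw [hcoW'x v hvW', if_pos hvU₀]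
    have hdbv' : co b' x v' = ux v' := by rw [hcoW'x v' hv'W', if_pos hv'U₀]
    have hybv : co b y v = a v := by rw [hcoWy v hvW, if_pos hvU₀]
    have hybv' : co b y v' = a v' := by rw [hcoWy v' hv'W, if_pos hv'U₀]
    have hydv : co b' y v = a v := by rw [hcoW'y v hvW', if_pos hvU₀]
    have hydv' : co b' y v' = a v' := by rw [hcoW'y v' hv'W', if_pos hv'U₀]
    have huxv : 0 < ux v := by rw [← hcbv]; exact hcv
    have huxv' : 0 < ux v' := by rw [← hcbv']; exact hcv'
    have htt : a v / ux v = a v' / ux v' := by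
      by_cases hvv : v = v'
      · rw [hvv]
      · have h1 := m1 v' hv'W (fun h => hvv h.symm)
        have h2 := n1 v hvW' hvv
        rw [hybv', hcbv', hybv, hcbv] at h1
        rw [hydv, hdbv, hydv', hdbv'] at h2
        exact le_antisymm ((le_div_iff₀ huxv').mpr h1) ((le_div_iff₀ huxv).mpr h2)
    by_cases hvv : v = v'
    · subst hvv
      rw [Finset.erase_idem]
      refine (mem_hull_insert_iff hb hU₀W hvU₀ hxW hx hcv).mpr ⟨m0, ?_, ?_⟩
      · intro w hwU₀ hwv
        exact m1 w (hU₀W hwU₀) hwv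
      · intro w hwW hwU₀
        rw [hcoWy w hwW, if_neg hwU₀, hcoWx w hwW, if_neg hwU₀, mul_zero]
    · have hUe : U₀.erase v' ⊆ W := (Finset.erase_subset _ _).trans hU₀W
      have hvUe : v ∈ U₀.erase v' := Finset.mem_erase.mpr ⟨hvv, hvU₀⟩
      rw [show (U₀.erase v).erase v' = (U₀.erase v').erase v from Finset.erase_right_comm]
      refine (mem_hull_insert_iff hb hUe hvUe hxW hx hcv).mpr ⟨m0, ?_, ?_⟩
      · intro w hw hwv
        exact m1 w (hUe hw) hwv
      · intro w hwW hwU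
        by_cases hwU₀ : w ∈ U₀
        · have hwv' : w = v' := by
            by_contra hc
            exact hwU (Finset.mem_erase.mpr ⟨hc, hwU₀⟩)
          subst hwv'
          rw [hybv, hcbv, hybv', hcbv', htt, div_mul_cancel₀ _ (ne_of_gt huxv')]
        · rw [hcoWy w hwW, if_neg hwU₀, hcoWx w hwW, if_neg hwU₀, mul_zero]
  · intro z hz
    exact ⟨convexHull_mono (Finset.coe_subset.mpr hsetW) hz,
      convexHull_mono (Finset.coe_subset.mpr hsetW') hz⟩


lemma linIndep_erase (hW : AffineIndependent ℝ (fun i : ↥W => (i : Fin d → ℝ)))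
    {f₀ : Fin d → ℝ} (hf₀ : f₀ ∈ W) :
    LinearIndependent ℝ (fun w : ↥(W.erase f₀) => (w : Fin d → ℝ) - f₀) := by
  classical
  rw [Fintype.linearIndependent_iff]
  intro g hg
  set G : (Fin d → ℝ) → ℝ := fun z => if h : z ∈ W.erase f₀ then g ⟨z, h⟩ else 0 with hG
  have hGg : ∀ i : ↥(W.erase f₀), G ↑i = g i := fun i => by rw [hG]; simp only [dif_pos i.2]
  have hgsum : ∑ w ∈ W.erase f₀, G w • (w - f₀) = 0 := by
    rw [← Finset.sum_coe_sort (W.erase f₀) (fun z => G z • (z - f₀)),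
      Finset.sum_congr rfl fun (i : ↥(W.erase f₀)) (_ : i ∈ univ) => by rw [hGg i]]
    exact hg
  set h : (Fin d → ℝ) → ℝ := fun w => if w = f₀ then -(∑ z ∈ W.erase f₀, G z) else G w
    with hh
  have hhf₀ : h f₀ = -(∑ z ∈ W.erase f₀, G z) := by rw [hh]; simp
  have hhw : ∀ w ∈ W.erase f₀, h w = G w := fun w hw => by
    rw [hh]; simp only [if_neg (Finset.mem_erase.mp hw).1]
  have hsum : ∑ w ∈ W, h w = 0 := by
    rw [← Finset.add_sum_erase W h hf₀, hhf₀, Finset.sum_congr rfl hhw]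
    ring
  have hcmb : ∑ w ∈ W, h w • w = 0 := by
    rw [← Finset.add_sum_erase W (fun w => h w • w) hf₀, hhf₀,
      Finset.sum_congr rfl (fun w hw => by rw [hhw w hw] :
        ∀ w ∈ W.erase f₀, h w • w = G w • w)]
    rw [show (∑ w ∈ W.erase f₀, G w • w)
        = (∑ w ∈ W.erase f₀, G w • (w - f₀)) + (∑ w ∈ W.erase f₀, G w) • f₀ by
      rw [Finset.sum_smul, ← Finset.sum_add_distrib]
      refine Finset.sum_congr rfl fun w _ => ?_
      rw [smul_sub]
      abel]
    rw [hgsum]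
    simp
  have hall : ∀ i : ↥W, h ↑i = 0 := by
    have := (affineIndependent_iff_of_fintype ℝ (fun i : ↥W => (i : Fin d → ℝ))).mp hW
      (fun i => h ↑i) ?_ ?_
    · exact this
    · rw [Finset.sum_coe_sort W h]; exact hsum
    · rw [Finset.univ.weightedVSub_eq_linear_combination
        (by rw [Finset.sum_coe_sort W h]; exact hsum)]
      rw [show (∑ i : ↥W, h ↑i • (i : Fin d → ℝ)) = ∑ w ∈ W, h w • w from
        Finset.sum_coe_sort W (fun w => h w • w)]
      exact hcmb
  intro i
  have hi := hall ⟨↑i, Finset.mem_of_mem_erase i.2⟩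
  rw [hh] at hi
  simp only [if_neg (Finset.mem_erase.mp i.2).1] at hi
  rw [← hGg i]
  exact hi

lemma combo_mem_span {A : Finset (Fin d → ℝ)} {f₀ : Fin d → ℝ} (hf₀ : f₀ ∈ A)
    {t : (Fin d → ℝ) → ℝ} (h0 : ∑ w ∈ A, t w = 0) :
    (∑ w ∈ A, t w • w) ∈
      Submodule.span ℝ (Set.range (fun w : ↥(A.erase f₀) => (w : Fin d → ℝ) - f₀)) := by
  classical
  have h1 : ∑ w ∈ A, t w • w = ∑ w ∈ A, t w • (w - f₀) := by
    rw [show (∑ w ∈ A, t w • (w - f₀)) = (∑ w ∈ A, t w • w) - (∑ w ∈ A, t w) • f₀ by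
      rw [Finset.sum_smul, ← Finset.sum_sub_distrib]
      refine Finset.sum_congr rfl fun w _ => ?_
      rw [smul_sub], h0, zero_smul, sub_zero]
  have h2 : ∑ w ∈ A, t w • (w - f₀) = ∑ w ∈ A.erase f₀, t w • (w - f₀) := by
    rw [← Finset.add_sum_erase A _ hf₀]
    simp
  rw [h1, h2, ← Finset.sum_coe_sort (A.erase f₀) (fun w => t w • (w - f₀))]
  apply Submodule.sum_mem
  intro i _
  exact Submodule.smul_mem _ _ (Submodule.subset_span ⟨i, rfl⟩)


lemma card_lower_bound {Γ₀ : Finset (Finset (Fin d → ℝ))} {x f₀ : Fin d → ℝ}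
    {F : Finset (Fin d → ℝ)} {u : (Fin d → ℝ) → ℝ}
    (hne : Γ₀.Nonempty) (hf₀F : f₀ ∈ F)
    (hprops : ∀ W ∈ Γ₀, AffineIndependent ℝ (fun i : ↥W => (i : Fin d → ℝ)) ∧
      W.card = d + 1 ∧ F ⊆ W)
    (husum : ∑ w ∈ F, u w = 1) (hucmb : ∑ w ∈ F, u w • w = x)
    (hδ : ∃ δ > 0, Metric.ball x δ ⊆ ⋃ W ∈ Γ₀, convexHull ℝ (W : Set (Fin d → ℝ))) :
    d + 2 ≤ Γ₀.card + F.card := by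
  classical
  rcases Nat.eq_zero_or_pos d with hd0 | hd0
  · have h1 : 1 ≤ Γ₀.card := Finset.card_pos.mpr hne
    have h2 : 1 ≤ F.card := Finset.card_pos.mpr ⟨f₀, hf₀F⟩
    omega
  by_contra hcon
  push_neg at hcon
  obtain ⟨δ, hδ0, hball⟩ := hδ
  obtain ⟨W₁, hW₁⟩ := hne
  have hF1 : 1 ≤ F.card := Finset.card_pos.mpr ⟨f₀, hf₀F⟩
  have hdimE : Module.finrank ℝ (Fin d → ℝ) = d := by
    rw [Module.finrank_pi ℝ, Fintype.card_fin]
  set L : Submodule ℝ (Fin d → ℝ) :=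
    Submodule.span ℝ (Set.range (fun w : ↥(F.erase f₀) => (w : Fin d → ℝ) - f₀)) with hL
  have hFW₁ : F ⊆ W₁ := (hprops W₁ hW₁).2.2
  have hliF : LinearIndependent ℝ (fun w : ↥(F.erase f₀) => (w : Fin d → ℝ) - f₀) := by
    have h1 := linIndep_erase (hprops W₁ hW₁).1 (hFW₁ hf₀F)
    have hsub : F.erase f₀ ⊆ W₁.erase f₀ := Finset.erase_subset_erase _ hFW₁
    exact h1.comp (fun w : ↥(F.erase f₀) => (⟨↑w, hsub w.2⟩ : ↥(W₁.erase f₀)))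
      (fun a b hab => Subtype.ext (by have h := congrArg Subtype.val hab; exact h))
  have hLrank : Module.finrank ℝ L = F.card - 1 := by
    rw [hL, finrank_span_eq_card hliF, Fintype.card_coe, Finset.card_erase_of_mem hf₀F]
  obtain ⟨M, hM⟩ := Submodule.exists_isCompl L
  have hMrank : Module.finrank ℝ M = d - (F.card - 1) := by
    have h1 := Submodule.finrank_add_eq_of_isCompl hM
    rw [hdimE, hLrank] at h1
    have hFd : F.card - 1 ≤ d := by
      have h2 : F.card ≤ d + 1 := le_trans (Finset.card_le_card hFW₁)
        (le_of_eq (hprops W₁ hW₁).2.1)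
      omega
    omega
  -- functionals
  have hphi : ∀ W ∈ Γ₀, ∃ φ : (Fin d → ℝ) →ₗ[ℝ] ℝ,
      ∀ t : (Fin d → ℝ) → ℝ, ∑ w ∈ W, t w = 0 →
        φ (∑ w ∈ W, t w • w) = ∑ w ∈ W.filter (fun w => w ∉ F), t w := by
    intro W hW
    obtain ⟨hWa, hWc, hWF⟩ := hprops W hW
    have hf₀W : f₀ ∈ W := hWF hf₀F
    have hli := linIndep_erase hWa hf₀W
    have hcard0 : (W.erase f₀).card = d := by
      rw [Finset.card_erase_of_mem hf₀W, hWc]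
      omega
    haveI : Nonempty ↥(W.erase f₀) := Finset.nonempty_coe_sort.mpr
      (Finset.card_pos.mp (by omega))
    have hcard : Fintype.card ↥(W.erase f₀) = Module.finrank ℝ (Fin d → ℝ) := by
      rw [Fintype.card_coe, hcard0, hdimE]
    set B := basisOfLinearIndependentOfCardEqFinrank hli hcard with hB
    have hBapp : ∀ i : ↥(W.erase f₀), B i = (i : Fin d → ℝ) - f₀ := fun i => by
      rw [hB, coe_basisOfLinearIndependentOfCardEqFinrank]
    set φ0 : (Fin d → ℝ) →ₗ[ℝ] ℝ :=
      ∑ i ∈ univ.filter (fun i : ↥(W.erase f₀) => (i : Fin d → ℝ) ∉ F), B.coord i with hφ0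
    refine ⟨φ0, ?_⟩
    intro t ht
    have hval : ∀ j : ↥(W.erase f₀),
        φ0 ((j : Fin d → ℝ) - f₀) = if (j : Fin d → ℝ) ∉ F then 1 else 0 := by
      intro j
      rw [← hBapp j, hφ0, LinearMap.sum_apply]
      rw [Finset.sum_congr rfl (fun i _ => by
        rw [Module.Basis.coord_apply, Module.Basis.repr_self_apply] :
        ∀ i ∈ univ.filter (fun i : ↥(W.erase f₀) => (i : Fin d → ℝ) ∉ F),
          B.coord i (B j) = if j = i then 1 else 0)]
      rw [Finset.sum_ite_eq]
      simp
    have hsplit : (∑ w ∈ W, t w • w)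
        = ∑ j : ↥(W.erase f₀), t ↑j • ((j : Fin d → ℝ) - f₀) := by
      have h1 : ∑ w ∈ W, t w • w = ∑ w ∈ W, t w • (w - f₀) := by
        rw [show (∑ w ∈ W, t w • (w - f₀)) = (∑ w ∈ W, t w • w) - (∑ w ∈ W, t w) • f₀ by
          rw [Finset.sum_smul, ← Finset.sum_sub_distrib]
          refine Finset.sum_congr rfl fun w _ => ?_
          rw [smul_sub], ht, zero_smul, sub_zero]
      have h2 : ∑ w ∈ W, t w • (w - f₀) = ∑ w ∈ W.erase f₀, t w • (w - f₀) := by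
        rw [← Finset.add_sum_erase W _ hf₀W]
        simp
      rw [h1, h2, ← Finset.sum_coe_sort (W.erase f₀) (fun w => t w • (w - f₀))]
    rw [hsplit, map_sum]
    rw [Finset.sum_congr rfl (fun j _ => by rw [map_smul, hval j, smul_eq_mul] :
      ∀ j ∈ (univ : Finset ↥(W.erase f₀)),
        φ0 (t ↑j • ((j : Fin d → ℝ) - f₀))
          = t ↑j * (if (j : Fin d → ℝ) ∉ F then 1 else 0))]
    rw [Finset.sum_congr rfl (fun j _ => by rw [mul_ite, mul_one, mul_zero] :
      ∀ j ∈ (univ : Finset ↥(W.erase f₀)),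
        t ↑j * (if (j : Fin d → ℝ) ∉ F then 1 else 0)
          = (if (j : Fin d → ℝ) ∉ F then t ↑j else 0))]
    rw [Finset.sum_coe_sort (W.erase f₀) (fun w => if w ∉ F then t w else 0)]
    rw [← Finset.sum_filter]
    congr 1
    ext w
    simp only [Finset.mem_filter, Finset.mem_erase]
    constructor
    · rintro ⟨⟨hwf₀, hwW⟩, hwF⟩
      exact ⟨hwW, hwF⟩
    · rintro ⟨hwW, hwF⟩
      exact ⟨⟨fun h => hwF (h ▸ hf₀F), hwW⟩, hwF⟩
  choose φ hφ using hphi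
  -- choice of a direction uu
  obtain ⟨uu, huM, hune, hphile⟩ :
      ∃ uu : Fin d → ℝ, uu ∈ M ∧ uu ≠ 0 ∧ ∀ (W) (hW : W ∈ Γ₀), φ W hW uu ≤ 0 := by
    set Φ : M →ₗ[ℝ] (↥Γ₀ → ℝ) :=
      LinearMap.pi (fun Wp : ↥Γ₀ => (φ ↑Wp Wp.2).comp M.subtype) with hΦ
    by_cases hker : LinearMap.ker Φ = ⊥
    · have hinj : Function.Injective Φ := LinearMap.ker_eq_bot.mp hker
      have hle : Module.finrank ℝ M ≤ Γ₀.card := by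
        have h1 := LinearMap.finrank_le_finrank_of_injective hinj
        rwa [Module.finrank_pi ℝ, Fintype.card_coe] at h1
      have heq : Module.finrank ℝ M = Module.finrank ℝ (↥Γ₀ → ℝ) := by
        rw [Module.finrank_pi ℝ, Fintype.card_coe, hMrank]
        omega
      have hsurj := (LinearMap.injective_iff_surjective_of_finrank_eq_finrank heq).mp hinj
      obtain ⟨uu', huu'⟩ := hsurj (fun _ => (-1 : ℝ))
      refine ⟨↑uu', uu'.2, ?_, ?_⟩
      · intro h0
        have h1 : uu' = 0 := by
          apply Subtype.ext
          exact h0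
        rw [h1, map_zero] at huu'
        have h2 := congr_fun huu' ⟨W₁, hW₁⟩
        norm_num at h2
      · intro W hW
        have h2 := congr_fun huu' ⟨W, hW⟩
        have h3 : φ W hW ↑uu' = -1 := h2
        rw [h3]
        norm_num
    · obtain ⟨uu', huu'ker, hne'⟩ := (Submodule.ne_bot_iff _).mp hker
      refine ⟨↑uu', uu'.2, ?_, fun W hW => ?_⟩
      · intro h0
        exact hne' (Subtype.ext h0)
      · have h1 := congr_fun (LinearMap.mem_ker.mp huu'ker) ⟨W, hW⟩
        have h2 : φ W hW ↑uu' = 0 := h1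
        exact le_of_eq h2
  -- the contradiction
  set ε := δ / (2 * (‖uu‖ + 1)) with hε
  have hε0 : 0 < ε := by positivity
  have hz : x + ε • uu ∈ Metric.ball x δ := by
    rw [Metric.mem_ball, dist_eq_norm, add_sub_cancel_left, norm_smul, Real.norm_eq_abs,
      abs_of_pos hε0, hε]
    rw [div_mul_eq_mul_div, div_lt_iff₀ (by positivity)]
    nlinarith [norm_nonneg uu]
  obtain ⟨W, hWΓ₀, hzW⟩ : ∃ W ∈ Γ₀, x + ε • uu ∈ convexHull ℝ (W : Set (Fin d → ℝ)) := by
    have h1 := hball hz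
    simpa using h1
  obtain ⟨a, ha0, ha1, ha2⟩ := mem_hull_weights.mp hzW
  obtain ⟨hWa, hWc, hWF⟩ := hprops W hWΓ₀
  set c : (Fin d → ℝ) → ℝ := fun w => if w ∈ F then u w else 0 with hc
  have hcsum : ∑ w ∈ W, c w = 1 := by
    rw [hc]
    simp only []
    rw [Finset.sum_ite_mem, Finset.inter_eq_right.mpr hWF]
    exact husum
  have hccmb : ∑ w ∈ W, c w • w = x := by
    rw [show (∑ w ∈ W, c w • w) = ∑ w ∈ W, (if w ∈ F then u w • w else 0) by
      refine Finset.sum_congr rfl fun w _ => ?_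
      by_cases hwF : w ∈ F <;> simp [hc, hwF]]
    rw [Finset.sum_ite_mem, Finset.inter_eq_right.mpr hWF]
    exact hucmb
  set t : (Fin d → ℝ) → ℝ := fun w => a w - c w with hts
  have ht0 : ∑ w ∈ W, t w = 0 := by
    rw [hts, Finset.sum_sub_distrib, ha1, hcsum, sub_self]
  have htc : ∑ w ∈ W, t w • w = ε • uu := by
    rw [hts]
    rw [show (∑ w ∈ W, (a w - c w) • w) = (∑ w ∈ W, a w • w) - (∑ w ∈ W, c w • w) by
      rw [← Finset.sum_sub_distrib]
      refine Finset.sum_congr rfl fun w _ => ?_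
      rw [sub_smul]]
    rw [ha2, hccmb, add_sub_cancel_left]
  have hφval := hφ W hWΓ₀ t ht0
  rw [htc] at hφval
  have hφle : (0:ℝ) ≥ ∑ w ∈ W.filter (fun w => w ∉ F), t w := by
    rw [← hφval, map_smul, smul_eq_mul]
    exact mul_nonpos_of_nonneg_of_nonpos hε0.le (hphile W hWΓ₀)
  have hterm : ∀ w ∈ W.filter (fun w => w ∉ F), 0 ≤ t w := by
    intro w hw
    obtain ⟨hwW, hwF⟩ := Finset.mem_filter.mp hw
    rw [hts]
    simp only []
    rw [hc]
    simp only [if_neg hwF, sub_zero]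
    exact ha0 w hwW
  have hzero : ∀ w ∈ W.filter (fun w => w ∉ F), t w = 0 :=
    (Finset.sum_eq_zero_iff_of_nonneg hterm).mp
      (le_antisymm hφle (Finset.sum_nonneg hterm))
  have htzero : ∀ w ∈ W, w ∉ F → t w = 0 := fun w hw hwF =>
    hzero w (Finset.mem_filter.mpr ⟨hw, hwF⟩)
  have hmem : (ε • uu) ∈ L := by
    rw [← htc, show (∑ w ∈ W, t w • w) = ∑ w ∈ F, t w • w from
      (Finset.sum_subset hWF (fun w hw hwF => by rw [htzero w hw hwF, zero_smul])).symm]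
    exact combo_mem_span hf₀F
      (by rw [show (∑ w ∈ F, t w) = ∑ w ∈ W, t w from
        Finset.sum_subset hWF (fun w hw hwF => htzero w hw hwF), ht0])
  have huuL : uu ∈ L := by
    have h1 := L.smul_mem ε⁻¹ hmem
    rwa [smul_smul, inv_mul_cancel₀ (ne_of_gt hε0), one_smul] at h1
  exact hune (Submodule.disjoint_def.mp hM.disjoint uu huuL huM)


lemma cover_new (hb : ∀ i : ↥W, b i = ↑i) {x y : Fin d → ℝ}
    (hx : x ∈ convexHull ℝ (W : Set (Fin d → ℝ)))
    (hy : y ∈ convexHull ℝ (W : Set (Fin d → ℝ))) (hxW : x ∉ W) :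
    ∃ v ∈ W, 0 < co b x v ∧
      y ∈ convexHull ℝ ((insert x (W.erase v) : Finset (Fin d → ℝ)) : Set (Fin d → ℝ)) := by
  classical
  have hx0 := (mem_hull_iff hb x).mp hx
  have hy0 := (mem_hull_iff hb y).mp hy
  have hFne : ∃ w ∈ W, 0 < co b x w := by
    by_contra hc
    push_neg at hc
    have h1 : ∑ w ∈ W, co b x w ≤ 0 := Finset.sum_nonpos hc
    rw [sum_co] at h1
    linarith
  set F := W.filter (fun w => 0 < co b x w) with hF
  have hFne' : F.Nonempty := by
    obtain ⟨w, h1, h2⟩ := hFne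
    exact ⟨w, Finset.mem_filter.mpr ⟨h1, h2⟩⟩
  obtain ⟨v, hvF, hvmin⟩ := Finset.exists_min_image F (fun w => co b y w / co b x w) hFne'
  obtain ⟨hvW, hvpos⟩ := Finset.mem_filter.mp hvF
  refine ⟨v, hvW, hvpos, ?_⟩
  refine (mem_hull_insert_iff hb (le_refl W) hvW hxW hx hvpos).mpr
    ⟨hy0 v hvW, ?_, fun w hw hwW => absurd hw hwW⟩
  intro w hwW hwv
  by_cases hwF : 0 < co b x w
  · have h1 := hvmin w (Finset.mem_filter.mpr ⟨hwW, hwF⟩)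
    rw [div_le_div_iff₀ hvpos hwF] at h1
    rw [div_mul_eq_mul_div, div_le_iff₀ hvpos]
    exact h1
  · have h2 : co b x w = 0 := le_antisymm (not_lt.mp hwF) (hx0 w hwW)
    rw [h2, mul_zero]
    exact hy0 w hwW

end StarSubdiv

/-- `Γ` is a triangulation of the `d`-dimensional convex polytope `P ⊂ ℝ^d` on the
set `V ⊆ P`. -/
def IsTriangulation (d : ℕ) (P : Set (Fin d → ℝ)) (V : Set (Fin d → ℝ))
    (Γ : Finset (Finset (Fin d → ℝ))) : Prop :=
  (∀ W ∈ Γ, W.card = d + 1 ∧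
      AffineIndependent ℝ (fun x : (W : Set (Fin d → ℝ)) => (x : Fin d → ℝ)) ∧
      (W : Set (Fin d → ℝ)) ⊆ V) ∧
  (∀ x ∈ V, ∃ W ∈ Γ, x ∈ W) ∧
  (∀ W ∈ Γ, ∀ W' ∈ Γ, ∃ U : Finset (Fin d → ℝ), U ⊆ W ∧ U ⊆ W' ∧
      convexHull ℝ (W : Set (Fin d → ℝ)) ∩ convexHull ℝ (W' : Set (Fin d → ℝ))
        = convexHull ℝ (U : Set (Fin d → ℝ))) ∧
  P = ⋃ W ∈ Γ, convexHull ℝ (W : Set (Fin d → ℝ))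

/-- Let `P ⊂ ℝ^d` be a convex polytope of dimension `d`, `V ⊆ P` a finite set
containing every vertex (extreme point) of `P`, `Γ` a triangulation of `P` on `V`,
and `x` a point of the interior of `P` with `x ∉ V`.  Then there exists a
triangulation `Γ'` of `P` on `V ∪ {x}` with `|Γ'| ≥ |Γ| + d`. -/
theorem exists_triangulation_insert_interior_point
    (d : ℕ) (S : Finset (Fin d → ℝ))
    (P : Set (Fin d → ℝ)) (hP : P = convexHull ℝ (S : Set (Fin d → ℝ)))
    (hdim : affineSpan ℝ (S : Set (Fin d → ℝ)) = ⊤)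
    (V : Finset (Fin d → ℝ)) (hVP : (V : Set (Fin d → ℝ)) ⊆ P)
    (hvert : Set.extremePoints ℝ P ⊆ (V : Set (Fin d → ℝ)))
    (Γ : Finset (Finset (Fin d → ℝ)))
    (hΓ : IsTriangulation d P (V : Set (Fin d → ℝ)) Γ)
    (x : Fin d → ℝ) (hx : x ∈ interior P) (hxV : x ∉ V) :
    ∃ Γ' : Finset (Finset (Fin d → ℝ)),
      IsTriangulation d P ((V : Set (Fin d → ℝ)) ∪ {x}) Γ' ∧
      Γ.card + d ≤ Γ'.card := by
  classical
  obtain ⟨hΓ1, hΓ2, hΓ3, hΓ4⟩ := hΓ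
  have hΓind : ∀ W ∈ Γ, AffineIndependent ℝ (fun i : ↥W => (i : Fin d → ℝ)) := fun W hW =>
    (hΓ1 W hW).2.1
  have hbase : ∀ W : Finset (Fin d → ℝ), W ∈ Γ →
      ∃ b : AffineBasis ↥W ℝ (Fin d → ℝ), ∀ i : ↥W, b i = ↑i := fun W hW =>
    StarSubdiv.exists_basis (hΓind W hW) (hΓ1 W hW).1
  choose bb hbb using hbase
  have hxP : x ∈ P := interior_subset hx
  obtain ⟨W₀, hW₀Γ, hxW₀⟩ : ∃ W ∈ Γ, x ∈ convexHull ℝ (W : Set (Fin d → ℝ)) := by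
    rw [hΓ4] at hxP
    simpa using hxP
  have hxP : x ∈ P := interior_subset hx
  have hxnotW : ∀ W ∈ Γ, x ∉ W := by
    intro W hW hxW
    exact hxV (Finset.mem_coe.mp ((hΓ1 W hW).2.2 (Finset.mem_coe.mpr hxW)))
  set u : (Fin d → ℝ) → ℝ := StarSubdiv.co (bb W₀ hW₀Γ) x with hu
  set F : Finset (Fin d → ℝ) := W₀.filter (fun w => 0 < u w) with hF
  have hFW₀ : F ⊆ W₀ := Finset.filter_subset _ _
  have hu0 : ∀ w ∈ W₀, 0 ≤ u w := (StarSubdiv.mem_hull_iff (hbb W₀ hW₀Γ) x).mp hxW₀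
  have huF : ∀ w ∈ F, 0 < u w := fun w hw => (Finset.mem_filter.mp hw).2
  have huncg : ∀ w ∈ W₀, w ∉ F → u w = 0 := by
    intro w hw hwF
    rcases (hu0 w hw).lt_or_eq with h | h
    · exact absurd (Finset.mem_filter.mpr ⟨hw, h⟩) hwF
    · exact h.symm
  have hsumF : ∑ w ∈ F, u w = 1 := by
    rw [Finset.sum_subset hFW₀ (fun w hw hwF => huncg w hw hwF)]
    exact StarSubdiv.sum_co x
  have hcombF : ∑ w ∈ F, u w • w = x := by
    rw [Finset.sum_subset hFW₀ (fun w hw hwF => by rw [huncg w hw hwF, zero_smul])]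
    exact StarSubdiv.combo_co (hbb W₀ hW₀Γ) x
  have hxF : x ∈ convexHull ℝ (F : Set (Fin d → ℝ)) :=
    StarSubdiv.mem_hull_weights.mpr ⟨u, fun w hw => (huF w hw).le, hsumF, hcombF⟩
  have hF1 : 1 ≤ F.card := by
    rcases Finset.eq_empty_or_nonempty F with h | h
    · rw [h] at hsumF
      simp at hsumF
    · exact Finset.card_pos.mpr h
  obtain ⟨f₀, hf₀F⟩ := Finset.card_pos.mp hF1
  have hF2 : 2 ≤ F.card := by
    by_contra hc
    push_neg at hc
    have h1 : F.card = 1 := by omega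
    obtain ⟨z, hz⟩ := Finset.card_eq_one.mp h1
    rw [hz, Finset.sum_singleton] at hsumF hcombF
    rw [hsumF, one_smul] at hcombF
    have hzW₀ : z ∈ W₀ := hFW₀ (by rw [hz]; exact Finset.mem_singleton_self z)
    rw [hcombF] at hzW₀
    exact hxnotW W₀ hW₀Γ hzW₀
  have hkey : ∀ (W) (hW : W ∈ Γ), x ∈ convexHull ℝ (W : Set (Fin d → ℝ)) →
      F ⊆ W ∧ ∀ w ∈ W, StarSubdiv.co (bb W hW) x w = if w ∈ F then u w else 0 := by
    intro W hW hxW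
    obtain ⟨U₀, hU₀W₀, hU₀W, hI⟩ := hΓ3 W₀ hW₀Γ W hW
    have hxU₀ : x ∈ convexHull ℝ (U₀ : Set (Fin d → ℝ)) := by
      rw [← hI]; exact ⟨hxW₀, hxW⟩
    have hvan := ((StarSubdiv.mem_hull_subset_iff (hbb W₀ hW₀Γ) hU₀W₀).mp hxU₀).2
    have hFU₀ : F ⊆ U₀ := by
      intro w hw
      by_contra hc
      exact (ne_of_gt (huF w hw)) (by rw [hu]; exact hvan w (hFW₀ hw) hc)
    exact ⟨hFU₀.trans hU₀W, fun w hw =>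
      StarSubdiv.co_combo (hbb W hW) (hFU₀.trans hU₀W) hsumF hcombF hw⟩
  set ΓO : Finset (Finset (Fin d → ℝ)) :=
    Γ.filter (fun W => x ∉ convexHull ℝ (W : Set (Fin d → ℝ))) with hΓO
  set Γ₀ : Finset (Finset (Fin d → ℝ)) :=
    Γ.filter (fun W => x ∈ convexHull ℝ (W : Set (Fin d → ℝ))) with hΓ₀
  set ΓN : Finset (Finset (Fin d → ℝ)) :=
    (Γ₀ ×ˢ F).image (fun p => insert x (p.1.erase p.2)) with hΓN
  have hpos : ∀ (W) (hW : W ∈ Γ), x ∈ convexHull ℝ (W : Set (Fin d → ℝ)) →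
      ∀ v ∈ F, 0 < StarSubdiv.co (bb W hW) x v := by
    intro W hW hxW v hv
    rw [(hkey W hW hxW).2 v ((hkey W hW hxW).1 hv), if_pos hv]
    exact huF v hv
  refine ⟨ΓO ∪ ΓN, ⟨?_, ?_, ?_, ?_⟩, ?_⟩
  · -- (1) card/indep/subset
    intro A hA
    rcases Finset.mem_union.mp hA with hA | hA
    · obtain ⟨hAΓ, hAx⟩ := Finset.mem_filter.mp hA
      exact ⟨(hΓ1 A hAΓ).1, (hΓ1 A hAΓ).2.1,
        ((hΓ1 A hAΓ).2.2).trans Set.subset_union_left⟩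
    · obtain ⟨⟨W, v⟩, hp, rfl⟩ := Finset.mem_image.mp hA
      obtain ⟨hpΓ₀, hvF⟩ := Finset.mem_product.mp hp
      obtain ⟨hWΓ, hxhW⟩ := Finset.mem_filter.mp hpΓ₀
      have hvW : v ∈ W := (hkey W hWΓ hxhW).1 hvF
      have hxe : x ∉ W.erase v := fun h => hxnotW W hWΓ (Finset.mem_of_mem_erase h)
      refine ⟨?_, ?_, ?_⟩
      · rw [Finset.card_insert_of_notMem hxe, Finset.card_erase_of_mem hvW, (hΓ1 W hWΓ).1]
        omega
      · exact StarSubdiv.indep_insert (hbb W hWΓ) (hΓind W hWΓ) hvW (hxnotW W hWΓ) hxhW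
          (hpos W hWΓ hxhW v hvF)
      · intro z hz
        rcases Finset.mem_insert.mp (Finset.mem_coe.mp hz) with rfl | hz'
        · exact Set.mem_union_right _ rfl
        · exact Set.mem_union_left _
            ((hΓ1 W hWΓ).2.2 (Finset.mem_coe.mpr (Finset.mem_of_mem_erase hz')))
  · -- (2) vertices used
    intro y hy
    rcases hy with hyV | hyx
    · obtain ⟨W, hWΓ, hyW⟩ := hΓ2 y hyV
      by_cases hxW : x ∈ convexHull ℝ (W : Set (Fin d → ℝ))
      · obtain ⟨v, hvF, hvy⟩ : ∃ v ∈ F, v ≠ y := by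
          by_contra hc
          push_neg at hc
          have h1 : F ⊆ {y} := fun w hw => Finset.mem_singleton.mpr (hc w hw)
          have h2 := Finset.card_le_card h1
          simp only [Finset.card_singleton] at h2
          omega
        refine ⟨insert x (W.erase v), Finset.mem_union_right _ ?_, ?_⟩
        · exact Finset.mem_image.mpr ⟨(W, v), Finset.mem_product.mpr
            ⟨Finset.mem_filter.mpr ⟨hWΓ, hxW⟩, hvF⟩, rfl⟩
        · exact Finset.mem_insert_of_mem (Finset.mem_erase.mpr ⟨fun h => hvy h.symm, hyW⟩)
      · exact ⟨W, Finset.mem_union_left _ (Finset.mem_filter.mpr ⟨hWΓ, hxW⟩), hyW⟩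
    · have hyx' : y = x := hyx
      subst hyx'
      refine ⟨insert y (W₀.erase f₀), Finset.mem_union_right _ ?_, Finset.mem_insert_self _ _⟩
      exact Finset.mem_image.mpr ⟨(W₀, f₀), Finset.mem_product.mpr
        ⟨Finset.mem_filter.mpr ⟨hW₀Γ, hxW₀⟩, hf₀F⟩, rfl⟩
  · -- (3) intersections
    have hON : ∀ A ∈ ΓO, ∀ B ∈ ΓN, ∃ U : Finset (Fin d → ℝ), U ⊆ A ∧ U ⊆ B ∧
        convexHull ℝ (A : Set (Fin d → ℝ)) ∩ convexHull ℝ (B : Set (Fin d → ℝ))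
          = convexHull ℝ (U : Set (Fin d → ℝ)) := by
      intro A hA B hB
      obtain ⟨hAΓ, hAx⟩ := Finset.mem_filter.mp hA
      obtain ⟨⟨W, v⟩, hp, rfl⟩ := Finset.mem_image.mp hB
      obtain ⟨hpΓ₀, hvF⟩ := Finset.mem_product.mp hp
      obtain ⟨hWΓ, hxhW⟩ := Finset.mem_filter.mp hpΓ₀
      obtain ⟨U₀, hU₀A, hU₀W, hI⟩ := hΓ3 A hAΓ W hWΓ
      refine ⟨U₀.erase v, (Finset.erase_subset _ _).trans hU₀A, ?_, ?_⟩
      · intro w hw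
        obtain ⟨hwv, hwU₀⟩ := Finset.mem_erase.mp hw
        exact Finset.mem_insert_of_mem (Finset.mem_erase.mpr ⟨hwv, hU₀W hwU₀⟩)
      · exact StarSubdiv.inter_old_new (hbb W hWΓ) hU₀W (hxnotW W hWΓ) hxhW
          (hpos W hWΓ hxhW v hvF) hAx hI
    intro A hA B hB
    rcases Finset.mem_union.mp hA with hAo | hAn <;> rcases Finset.mem_union.mp hB with hBo | hBn
    · exact hΓ3 A (Finset.mem_filter.mp hAo).1 B (Finset.mem_filter.mp hBo).1
    · exact hON A hAo B hBn
    · obtain ⟨U, h1, h2, h3⟩ := hON B hBo A hAn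
      exact ⟨U, h2, h1, by rw [Set.inter_comm]; exact h3⟩
    · obtain ⟨⟨W, v⟩, hp, rfl⟩ := Finset.mem_image.mp hAn
      obtain ⟨hpΓ₀, hvF⟩ := Finset.mem_product.mp hp
      obtain ⟨hWΓ, hxhW⟩ := Finset.mem_filter.mp hpΓ₀
      obtain ⟨⟨W', v'⟩, hp', rfl⟩ := Finset.mem_image.mp hBn
      obtain ⟨hp'Γ₀, hv'F⟩ := Finset.mem_product.mp hp'
      obtain ⟨hW'Γ, hxhW'⟩ := Finset.mem_filter.mp hp'Γ₀
      obtain ⟨U₀, hU₀W, hU₀W', hI⟩ :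
          ∃ U₀ : Finset (Fin d → ℝ), U₀ ⊆ W ∧ U₀ ⊆ W' ∧
            convexHull ℝ (W : Set (Fin d → ℝ)) ∩ convexHull ℝ (W' : Set (Fin d → ℝ))
              = convexHull ℝ (U₀ : Set (Fin d → ℝ)) := by
        by_cases hWW' : W = W'
        · subst hWW'
          exact ⟨W, Finset.Subset.refl W, Finset.Subset.refl W, by rw [Set.inter_self]⟩
        · exact hΓ3 W hWΓ W' hW'Γ
      refine ⟨insert x ((U₀.erase v).erase v'), ?_, ?_, ?_⟩
      · exact Finset.insert_subset_insert _
          ((Finset.erase_subset _ _).trans (Finset.erase_subset_erase _ hU₀W))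
      · apply Finset.insert_subset_insert
        rw [Finset.erase_right_comm]
        exact (Finset.erase_subset _ _).trans (Finset.erase_subset_erase _ hU₀W')
      · exact StarSubdiv.inter_new_new (hbb W hWΓ) (hbb W' hW'Γ) hU₀W hU₀W' hI
          (hxnotW W hWΓ) (hxnotW W' hW'Γ) hxhW hxhW'
          (hpos W hWΓ hxhW v hvF) (hpos W hWΓ hxhW v' hv'F)
          (hpos W' hW'Γ hxhW' v hvF) (hpos W' hW'Γ hxhW' v' hv'F)
  · -- (4) covering
    apply Set.Subset.antisymm
    · intro y hyP
      rw [hΓ4] at hyP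
      obtain ⟨W, hWΓ, hyW⟩ : ∃ W ∈ Γ, y ∈ convexHull ℝ (W : Set (Fin d → ℝ)) := by
        simpa using hyP
      by_cases hxW : x ∈ convexHull ℝ (W : Set (Fin d → ℝ))
      · obtain ⟨v, hvW, hvpos, hyN⟩ :=
          StarSubdiv.cover_new (hbb W hWΓ) hxW hyW (hxnotW W hWΓ)
        have hvF : v ∈ F := by
          by_contra hc
          rw [(hkey W hWΓ hxW).2 v hvW, if_neg hc] at hvpos
          exact lt_irrefl 0 hvpos
        exact Set.mem_biUnion (Finset.mem_union_right _ (Finset.mem_image.mpr ⟨(W, v),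
          Finset.mem_product.mpr ⟨Finset.mem_filter.mpr ⟨hWΓ, hxW⟩, hvF⟩, rfl⟩)) hyN
      · exact Set.mem_biUnion (Finset.mem_union_left _ (Finset.mem_filter.mpr ⟨hWΓ, hxW⟩)) hyW
    · apply Set.iUnion₂_subset
      intro A hA
      rcases Finset.mem_union.mp hA with hA | hA
      · intro z hz
        rw [hΓ4]
        exact Set.mem_biUnion (Finset.mem_filter.mp hA).1 hz
      · obtain ⟨⟨W, v⟩, hp, rfl⟩ := Finset.mem_image.mp hA
        obtain ⟨hpΓ₀, hvF⟩ := Finset.mem_product.mp hp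
        obtain ⟨hWΓ, hxhW⟩ := Finset.mem_filter.mp hpΓ₀
        intro z hz
        have hzW := StarSubdiv.hullN_subset hxhW (Finset.erase_subset _ _) hz
        rw [hΓ4]
        exact Set.mem_biUnion hWΓ hzW
  · -- (5) cardinality
    have hdisj : Disjoint ΓO ΓN := by
      rw [Finset.disjoint_left]
      intro A hAo hAn
      obtain ⟨⟨W, v⟩, hp, rfl⟩ := Finset.mem_image.mp hAn
      exact hxnotW _ (Finset.mem_filter.mp hAo).1 (Finset.mem_insert_self _ _)
    have hinj : Set.InjOn (fun p : Finset (Fin d → ℝ) × (Fin d → ℝ) =>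
        insert x (p.1.erase p.2)) ↑(Γ₀ ×ˢ F) := by
      rintro ⟨W, v⟩ hWv ⟨W', v'⟩ hW'v' heq
      rw [Finset.mem_coe, Finset.mem_product] at hWv hW'v'
      obtain ⟨hWΓ₀, hvF⟩ := hWv
      obtain ⟨hW'Γ₀, hv'F⟩ := hW'v'
      obtain ⟨hWΓ, hxhW⟩ := Finset.mem_filter.mp hWΓ₀
      obtain ⟨hW'Γ, hxhW'⟩ := Finset.mem_filter.mp hW'Γ₀
      have hxe : x ∉ W.erase v := fun h => hxnotW W hWΓ (Finset.mem_of_mem_erase h)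
      have hxe' : x ∉ W'.erase v' := fun h => hxnotW W' hW'Γ (Finset.mem_of_mem_erase h)
      have heq2 : W.erase v = W'.erase v' := by
        have h1 := congrArg (fun s => Finset.erase s x) heq
        simp only [] at h1
        rwa [Finset.erase_insert hxe, Finset.erase_insert hxe'] at h1
      have hv'W' : v' ∈ W' := (hkey W' hW'Γ hxhW').1 hv'F
      have hWW' : W = W' := by
        apply Finset.Subset.antisymm
        · intro w hw
          by_cases hwv : w = v
          · subst hwv
            exact (hkey W' hW'Γ hxhW').1 hvF
          · exact Finset.mem_of_mem_erase (heq2 ▸ Finset.mem_erase.mpr ⟨hwv, hw⟩)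
        · intro w hw
          by_cases hwv : w = v'
          · subst hwv
            exact (hkey W hWΓ hxhW).1 hv'F
          · exact Finset.mem_of_mem_erase (heq2 ▸ Finset.mem_erase.mpr ⟨hwv, hw⟩)
      have hvv' : v = v' := by
        subst hWW'
        by_contra hc
        have h1 : v' ∈ W.erase v := Finset.mem_erase.mpr ⟨fun h => hc h.symm, hv'W'⟩
        rw [heq2] at h1
        exact (Finset.mem_erase.mp h1).1 rfl
      rw [Prod.ext_iff]
      exact ⟨hWW', hvv'⟩
    have hcardN : ΓN.card = Γ₀.card * F.card := by
      rw [hΓN, Finset.card_image_of_injOn hinj, Finset.card_product]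
    have hsplit : Γ₀.card + ΓO.card = Γ.card := by
      rw [hΓ₀, hΓO]
      exact Finset.card_filter_add_card_filter_not _
    have hm1 : 1 ≤ Γ₀.card := Finset.card_pos.mpr ⟨W₀, Finset.mem_filter.mpr ⟨hW₀Γ, hxW₀⟩⟩
    have hball : ∃ δ > 0, Metric.ball x δ ⊆ ⋃ W ∈ Γ₀, convexHull ℝ (W : Set (Fin d → ℝ)) := by
      obtain ⟨δ₁, hδ₁0, hδ₁⟩ := Metric.isOpen_iff.mp isOpen_interior x hx
      have hKclosed : IsClosed (⋃ W ∈ ΓO, convexHull ℝ (W : Set (Fin d → ℝ))) := by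
        apply Set.Finite.isClosed_biUnion ΓO.finite_toSet
        intro W hW
        exact (W.finite_toSet.isCompact_convexHull ℝ).isClosed
      have hxK : x ∉ ⋃ W ∈ ΓO, convexHull ℝ (W : Set (Fin d → ℝ)) := by
        intro hxK
        obtain ⟨W, hW, hxW⟩ := Set.mem_iUnion₂.mp hxK
        exact (Finset.mem_filter.mp hW).2 hxW
      obtain ⟨δ₂, hδ₂0, hδ₂⟩ := Metric.isOpen_iff.mp hKclosed.isOpen_compl x hxK
      refine ⟨min δ₁ δ₂, lt_min hδ₁0 hδ₂0, ?_⟩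
      intro y hy
      have hy1 : y ∈ interior P := hδ₁ (Metric.ball_subset_ball (min_le_left _ _) hy)
      have hy2 := hδ₂ (Metric.ball_subset_ball (min_le_right _ _) hy)
      have hyP : y ∈ P := interior_subset hy1
      rw [hΓ4] at hyP
      obtain ⟨W, hWΓ, hyW⟩ : ∃ W ∈ Γ, y ∈ convexHull ℝ (W : Set (Fin d → ℝ)) := by
        simpa using hyP
      by_cases hxW : x ∈ convexHull ℝ (W : Set (Fin d → ℝ))
      · exact Set.mem_biUnion (Finset.mem_filter.mpr ⟨hWΓ, hxW⟩) hyW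
      · exact absurd (Set.mem_biUnion (Finset.mem_filter.mpr ⟨hWΓ, hxW⟩ : W ∈ ΓO) hyW) hy2
    have hlow := StarSubdiv.card_lower_bound
      ⟨W₀, Finset.mem_filter.mpr ⟨hW₀Γ, hxW₀⟩⟩ hf₀F
      (fun W hW => ⟨hΓind W (Finset.mem_filter.mp hW).1,
        (hΓ1 W (Finset.mem_filter.mp hW).1).1,
        (hkey W (Finset.mem_filter.mp hW).1 (Finset.mem_filter.mp hW).2).1⟩)
      hsumF hcombF hball
    have hprod : d + Γ₀.card ≤ ΓN.card := by
      rw [hcardN]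
      obtain ⟨m', hm'⟩ := Nat.exists_eq_add_of_le hm1
      obtain ⟨K', hK'⟩ := Nat.exists_eq_add_of_le hF2
      rw [hm', hK'] at hlow ⊢
      have hq : (1 + m') * (2 + K') = 2 + K' + 2 * m' + m' * K' := by ring
      rw [hq]
      generalize m' * K' = q
      omega
    rw [Finset.card_union_of_disjoint hdisj]
    omega
end

section
/- Let P ⊂ ℝ^d be a convex polytope of dimension d, V ⊂ P a finite set containing every vertex of P, and Γ a triangulation of P on V. Let F₀ be a face of dimension e (with 1 ≤ e ≤ d) of some simplex of Γ such that F₀ is not contained in the boundary ∂P of P. Then the number q of d-simplices G ∈ Γ having F₀ as a face satisfies q ≥ d − e + 1. -/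
open Finset

lemma aux_face_subset {d : ℕ}
    {W₀ U U' : Finset (Fin d → ℝ)}
    (hind : AffineIndependent ℝ (fun x : ((W₀ : Set (Fin d → ℝ))) => (x : Fin d → ℝ)))
    (hU : U ⊆ W₀) (hU' : U' ⊆ W₀)
    {α β : (Fin d → ℝ) → ℝ}
    (hαpos : ∀ y ∈ U, 0 < α y) (hα1 : ∑ y ∈ U, α y = 1)
    (hβ0 : ∀ y ∈ U', 0 ≤ β y) (hβ1 : ∑ y ∈ U', β y = 1)
    (hx : ∑ y ∈ U, α y • y = ∑ y ∈ U', β y • y) : U ⊆ U' := by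
  classical
  set w : (Fin d → ℝ) → ℝ :=
    fun y => (if y ∈ U then α y else 0) - (if y ∈ U' then β y else 0) with hw
  have hsum0 : ∑ y ∈ W₀, w y = 0 := by
    rw [Finset.sum_sub_distrib]
    rw [Finset.sum_ite_mem, Finset.sum_ite_mem]
    rw [(Finset.inter_eq_right).2 hU, (Finset.inter_eq_right).2 hU', hα1, hβ1, sub_self]
  have hsum1 : ∑ y ∈ W₀, w y • y = 0 := by
    have : ∀ y, w y • y = (if y ∈ U then α y • y else 0) - (if y ∈ U' then β y • y else 0) := by
      intro y
      by_cases h1 : y ∈ U <;> by_cases h2 : y ∈ U' <;> simp [hw, h1, h2, sub_smul]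
    simp only [this]
    rw [Finset.sum_sub_distrib, Finset.sum_ite_mem, Finset.sum_ite_mem,
      (Finset.inter_eq_right).2 hU, (Finset.inter_eq_right).2 hU', hx, sub_self]
  have hkey : ∀ y ∈ W₀, w y = 0 := by
    intro y hy
    have hind' : AffineIndependent ℝ (fun i : {x // x ∈ W₀} => (i : Fin d → ℝ)) := hind
    have h := affineIndependent_iff.1 hind' W₀.attach (fun i => w ↑i) ?_ ?_ ⟨y, hy⟩
      (Finset.mem_attach _ _)
    · exact h
    · rw [Finset.sum_attach W₀ w]; exact hsum0
    · rw [Finset.sum_attach W₀ (fun y => w y • y)]; exact hsum1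
  intro u hu
  by_contra hu'
  have := hkey u (hU hu)
  rw [hw] at this
  simp only [if_pos hu, if_neg hu', sub_zero] at this
  exact absurd this (ne_of_gt (hαpos u hu))

lemma aux_neg_vector {Q : Type*} [AddCommGroup Q] [Module ℝ Q] [FiniteDimensional ℝ Q]
    {ι : Type*} [Fintype ι] [Nonempty ι] (f : ι → (Q →ₗ[ℝ] ℝ))
    (hcard : Fintype.card ι ≤ Module.finrank ℝ Q) :
    ∃ v : Q, v ≠ 0 ∧ ∀ i, f i v ≤ 0 := by
  classical
  set F : Q →ₗ[ℝ] (ι → ℝ) := LinearMap.pi f with hF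
  by_cases hinj : Function.Injective F
  · have h1 : Module.finrank ℝ (LinearMap.range F) = Module.finrank ℝ Q :=
      LinearMap.finrank_range_of_inj hinj
    have h2 : Module.finrank ℝ (ι → ℝ) = Fintype.card ι := Module.finrank_pi ℝ
    have h3 : Module.finrank ℝ (LinearMap.range F) ≤ Fintype.card ι := by
      rw [← h2]; exact Submodule.finrank_le _
    have h4 : Module.finrank ℝ (LinearMap.range F) = Module.finrank ℝ (ι → ℝ) := by
      rw [h2]; omega
    have hsurj : LinearMap.range F = ⊤ := Submodule.eq_top_of_finrank_eq h4
    obtain ⟨v, hv⟩ : ∃ v, F v = fun _ => (-1 : ℝ) := by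
      have := LinearMap.range_eq_top.1 hsurj
      exact this _
    refine ⟨v, ?_, ?_⟩
    · intro h0
      rw [h0, map_zero] at hv
      have := congrFun hv.symm (Classical.arbitrary ι)
      norm_num at this
    · intro i
      have : F v i = -1 := congrFun hv i
      rw [hF] at this
      simp only [LinearMap.pi_apply] at this
      rw [this]; norm_num
  · rw [← LinearMap.ker_eq_bot] at hinj
    obtain ⟨v, hv, hv0⟩ := Submodule.exists_mem_ne_zero_of_ne_bot hinj
    refine ⟨v, hv0, fun i => ?_⟩
    have : F v = 0 := hv
    have := congrFun this i
    simp only [LinearMap.pi_apply, F] at this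
    rw [this]; simp

lemma aux_simplex_functional {d : ℕ} (T : Finset (Fin d → ℝ)) (x : Fin d → ℝ)
    (A : Submodule ℝ (Fin d → ℝ))
    (hspan : ⊤ ≤ Submodule.span ℝ (Set.range (fun w : {y // y ∈ T} => A.mkQ ((w : Fin d → ℝ) - x))))
    (hcard : Fintype.card {y // y ∈ T} = Module.finrank ℝ ((Fin d → ℝ) ⧸ A)) :
    ∃ f : ((Fin d → ℝ) ⧸ A) →ₗ[ℝ] ℝ, ∀ μ : (Fin d → ℝ) → ℝ, (∀ w ∈ T, 0 ≤ μ w) →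
      f (∑ w ∈ T, μ w • A.mkQ (w - x)) ≤ 0 → ∑ w ∈ T, μ w • A.mkQ (w - x) = 0 := by
  classical
  set b := basisOfTopLeSpanOfCardEqFinrank (fun w : {y // y ∈ T} => A.mkQ ((w : Fin d → ℝ) - x))
    hspan hcard with hb
  have hbc : ⇑b = fun w : {y // y ∈ T} => A.mkQ ((w : Fin d → ℝ) - x) :=
    coe_basisOfTopLeSpanOfCardEqFinrank _ _ _
  refine ⟨b.sumCoords, fun μ hμ0 hle => ?_⟩
  have hrw : ∑ w ∈ T, μ w • A.mkQ (w - x) = ∑ i ∈ T.attach, μ ↑i • b i := by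
    rw [← Finset.sum_attach T (fun w => μ w • A.mkQ (w - x))]
    exact Finset.sum_congr rfl fun i _ => by rw [hbc]
  have hval : b.sumCoords (∑ w ∈ T, μ w • A.mkQ (w - x)) = ∑ w ∈ T, μ w := by
    rw [hrw, map_sum]
    rw [← Finset.sum_attach T μ]
    refine Finset.sum_congr rfl fun i _ => ?_
    rw [map_smul, Module.Basis.sumCoords_self_apply, smul_eq_mul, mul_one]
  rw [hval] at hle
  have hzero : ∀ w ∈ T, μ w = 0 := by
    have hsum0 : ∑ w ∈ T, μ w = 0 := le_antisymm hle (Finset.sum_nonneg hμ0)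
    exact fun w hw => (Finset.sum_eq_zero_iff_of_nonneg hμ0).1 hsum0 w hw
  refine Finset.sum_eq_zero fun w hw => by rw [hzero w hw, zero_smul]

/-- Let `P ⊂ ℝ^d` be a convex polytope of dimension `d`, `V ⊆ P` a finite set
containing every vertex (extreme point) of `P`, and `Γ` a triangulation of `P` on
`V`.  Let `F₀` be a face of dimension `e` (with `1 ≤ e ≤ d`) of some simplex of `Γ`
(given by its vertex set `U`, a set of `e + 1` vertices of some simplex of `Γ`)
such that `F₀` is not contained in the boundary `∂P` of `P`.  Then the number `q`
of `d`-simplices `G ∈ Γ` having `F₀` as a face satisfies `q ≥ d − e + 1`. -/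
theorem card_simplices_sharing_interior_face
    (d : ℕ) (S : Finset (Fin d → ℝ))
    (P : Set (Fin d → ℝ)) (hP : P = convexHull ℝ (S : Set (Fin d → ℝ)))
    (hdim : affineSpan ℝ (S : Set (Fin d → ℝ)) = ⊤)
    (V : Finset (Fin d → ℝ)) (hVP : (V : Set (Fin d → ℝ)) ⊆ P)
    (hvert : Set.extremePoints ℝ P ⊆ (V : Set (Fin d → ℝ)))
    (Γ : Finset (Finset (Fin d → ℝ)))
    (hΓ : IsTriangulation d P (V : Set (Fin d → ℝ)) Γ)
    (e : ℕ) (he1 : 1 ≤ e) (hed : e ≤ d)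
    (U : Finset (Fin d → ℝ)) (hUcard : U.card = e + 1)
    (W₀ : Finset (Fin d → ℝ)) (hW₀ : W₀ ∈ Γ) (hUW₀ : U ⊆ W₀)
    (hUbd : ¬ convexHull ℝ (U : Set (Fin d → ℝ)) ⊆ frontier P)
    (q : ℕ) (hq : q = (Γ.filter (fun W => U ⊆ W)).card) :
    d - e + 1 ≤ q := by
  classical
  obtain ⟨hsimplex, -, hglue, hunion⟩ := hΓ
  -- basic facts about P
  have hPconv : Convex ℝ P := hP ▸ convex_convexHull ℝ _
  have hPclosed : IsClosed P := hP ▸ (S.finite_toSet.isCompact_convexHull ℝ).isClosed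
  have hconvWP : ∀ W ∈ Γ, convexHull ℝ (W : Set (Fin d → ℝ)) ⊆ P := by
    intro W hW
    intro z hz
    rw [hunion]
    exact Set.mem_iUnion₂.2 ⟨W, hW, hz⟩
  -- extracting convex coefficients
  have hmem : ∀ (T : Finset (Fin d → ℝ)) (z : Fin d → ℝ),
      z ∈ convexHull ℝ (T : Set (Fin d → ℝ)) →
      ∃ w : (Fin d → ℝ) → ℝ, (∀ y ∈ T, 0 ≤ w y) ∧ ∑ y ∈ T, w y = 1 ∧ ∑ y ∈ T, w y • y = z := by
    intro T z hz
    rw [Finset.convexHull_eq] at hz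
    obtain ⟨w, h0, h1, h2⟩ := hz
    exact ⟨w, h0, h1, by rw [← Finset.centerMass_eq_of_sum_1 _ _ h1]; exact h2⟩
  have hmem' : ∀ (T : Finset (Fin d → ℝ)) (w : (Fin d → ℝ) → ℝ), (∀ y ∈ T, 0 ≤ w y) →
      ∑ y ∈ T, w y = 1 → ∑ y ∈ T, w y • y ∈ convexHull ℝ (T : Set (Fin d → ℝ)) := by
    intro T w h0 h1
    have := T.centerMass_mem_convexHull h0 (h1.symm ▸ zero_lt_one) (fun y hy => Finset.mem_coe.2 hy)
    rwa [Finset.centerMass_eq_of_sum_1 _ _ h1] at this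
  -- the point x₀ in conv U off the frontier, and its coefficients
  obtain ⟨x₀, hx₀U, hx₀f⟩ := Set.not_subset.1 hUbd
  have hUP : convexHull ℝ (U : Set (Fin d → ℝ)) ⊆ P :=
    (convexHull_mono (Finset.coe_subset.2 hUW₀)).trans (hconvWP W₀ hW₀)
  have hx₀int : x₀ ∈ interior P := by
    have h1 : x₀ ∈ P := hUP hx₀U
    have h2 := hPclosed.frontier_eq
    by_contra h3
    exact hx₀f (h2 ▸ ⟨h1, h3⟩)
  obtain ⟨γ, hγ0, hγ1, hγx⟩ := hmem U x₀ hx₀U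
  have hUne : U.Nonempty := Finset.card_pos.1 (by omega)
  have hUcardpos : (0 : ℝ) < (U.card : ℝ) := by
    have := hUne.card_pos; positivity
  -- the point x with strictly positive coefficients α on U
  set α : (Fin d → ℝ) → ℝ := fun y => (γ y + (U.card : ℝ)⁻¹) / 2 with hα
  have hαpos : ∀ y ∈ U, 0 < α y := by
    intro y hy
    have := hγ0 y hy
    have h2 : (0:ℝ) < (U.card : ℝ)⁻¹ := by positivity
    simp only [hα]
    linarith
  have hα1 : ∑ y ∈ U, α y = 1 := by
    simp only [hα]
    rw [← Finset.sum_div, Finset.sum_add_distrib, hγ1, Finset.sum_const, nsmul_eq_mul,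
      mul_inv_cancel₀ (ne_of_gt hUcardpos)]
    norm_num
  set x : Fin d → ℝ := ∑ y ∈ U, α y • y with hxdef
  have hxU : x ∈ convexHull ℝ (U : Set (Fin d → ℝ)) :=
    hmem' U α (fun y hy => le_of_lt (hαpos y hy)) hα1
  -- x is interior to P
  set c : Fin d → ℝ := ∑ y ∈ U, (U.card : ℝ)⁻¹ • y with hcdef
  have hcP : c ∈ P := by
    refine hUP (hmem' U _ (fun y _ => by positivity) ?_)
    rw [Finset.sum_const, nsmul_eq_mul, mul_inv_cancel₀ (ne_of_gt hUcardpos)]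
  have hxsplit : x = (1/2 : ℝ) • x₀ + (1/2 : ℝ) • c := by
    rw [hxdef, hcdef, ← hγx, Finset.smul_sum, Finset.smul_sum, ← Finset.sum_add_distrib]
    refine Finset.sum_congr rfl fun y _ => ?_
    rw [smul_smul, smul_smul, ← add_smul]
    congr 1
    simp only [hα]
    ring
  have hxint : x ∈ interior P := by
    rw [hxsplit]
    exact hPconv.combo_interior_self_mem_interior hx₀int hcP (by norm_num) (by norm_num)
      (by norm_num)
  -- the quotient space
  set A : Submodule ℝ (Fin d → ℝ) := vectorSpan ℝ (U : Set (Fin d → ℝ)) with hAdef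
  have hW₀ind := (hsimplex W₀ hW₀).2.1
  have hUind : AffineIndependent ℝ (fun i : {y // y ∈ U} => (i : Fin d → ℝ)) := by
    have : AffineIndependent ℝ (fun i : ((U : Set (Fin d → ℝ))) => (i : Fin d → ℝ)) :=
      hW₀ind.mono (Finset.coe_subset.2 hUW₀)
    exact this
  have hfinE : Module.finrank ℝ (Fin d → ℝ) = d := by
    rw [Module.finrank_pi]; exact Fintype.card_fin d
  have hArank : Module.finrank ℝ A = e := by
    have h := hUind.finrank_vectorSpan (n := e) (by rw [Fintype.card_coe, hUcard])
    have hrange : (Set.range fun i : {y // y ∈ U} => (i : Fin d → ℝ)) = (U : Set (Fin d → ℝ)) := by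
      rw [Subtype.range_coe_subtype]; ext z; simp
    rw [hrange] at h
    rw [hAdef]
    exact h
  have hQrank : Module.finrank ℝ ((Fin d → ℝ) ⧸ A) = d - e := by
    have h := A.finrank_quotient_add_finrank
    rw [hArank, hfinE] at h
    omega
  -- differences from points of U are killed by the quotient map
  have hπU : ∀ u ∈ U, A.mkQ (u - x) = 0 := by
    intro u hu
    rw [Submodule.mkQ_apply, Submodule.Quotient.mk_eq_zero]
    have h1 : u ∈ affineSpan ℝ (U : Set (Fin d → ℝ)) :=
      mem_affineSpan ℝ (Finset.mem_coe.2 hu)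
    have h2 : x ∈ affineSpan ℝ (U : Set (Fin d → ℝ)) :=
      convexHull_subset_affineSpan _ hxU
    have := AffineSubspace.vsub_mem_direction h1 h2
    rwa [direction_affineSpan, vsub_eq_sub] at this
  -- the functionals attached to simplices containing U
  set 𝒬 : Finset (Finset (Fin d → ℝ)) := Γ.filter (fun W => U ⊆ W) with h𝒬
  have hW₀𝒬 : W₀ ∈ 𝒬 := Finset.mem_filter.2 ⟨hW₀, hUW₀⟩
  have hfun : ∀ i : {W' // W' ∈ 𝒬}, ∃ f : ((Fin d → ℝ) ⧸ A) →ₗ[ℝ] ℝ,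
      ∀ μ : (Fin d → ℝ) → ℝ, (∀ w ∈ (i : Finset (Fin d → ℝ)) \ U, 0 ≤ μ w) →
      f (∑ w ∈ (i : Finset (Fin d → ℝ)) \ U, μ w • A.mkQ (w - x)) ≤ 0 →
      ∑ w ∈ (i : Finset (Fin d → ℝ)) \ U, μ w • A.mkQ (w - x) = 0 := by
    rintro ⟨W, hW⟩
    rw [h𝒬, Finset.mem_filter] at hW
    obtain ⟨hWΓ, hUW⟩ := hW
    obtain ⟨hWcard, hWind, -⟩ := hsimplex W hWΓ
    have hWind' : AffineIndependent ℝ (fun i : {y // y ∈ W} => (i : Fin d → ℝ)) := hWind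
    -- vectorSpan of W is everything
    have hWtop : vectorSpan ℝ (W : Set (Fin d → ℝ)) = ⊤ := by
      refine Submodule.eq_top_of_finrank_eq ?_
      have h := hWind'.finrank_vectorSpan (n := d) (by rw [Fintype.card_coe, hWcard])
      have hrange : (Set.range fun i : {y // y ∈ W} => (i : Fin d → ℝ)) = (W : Set (Fin d → ℝ)) := by
        rw [Subtype.range_coe_subtype]; ext z; simp
      rw [hrange] at h
      rw [hfinE]
      exact h
    have hspan1 : Submodule.span ℝ ((fun w => w - x) '' (W : Set (Fin d → ℝ))) = ⊤ := by
      rw [eq_top_iff]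
      refine le_trans (le_of_eq hWtop.symm) ?_
      rw [vectorSpan_def]
      refine Submodule.span_le.2 ?_
      rintro z hz
      rw [Set.mem_vsub] at hz
      obtain ⟨a, ha, b, hb, rfl⟩ := hz
      have : a -ᵥ b = (a - x) - (b - x) := by rw [vsub_eq_sub]; abel
      rw [SetLike.mem_coe, this]
      exact sub_mem (Submodule.subset_span ⟨a, ha, rfl⟩) (Submodule.subset_span ⟨b, hb, rfl⟩)
    have hspan : ⊤ ≤ Submodule.span ℝ
        (Set.range (fun w : {y // y ∈ W \ U} => A.mkQ ((w : Fin d → ℝ) - x))) := by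
      have h2 : Submodule.span ℝ (A.mkQ '' ((fun w => w - x) '' (W : Set (Fin d → ℝ)))) = ⊤ := by
        rw [← Submodule.map_span, hspan1, Submodule.map_top, Submodule.range_mkQ]
      rw [← h2]
      refine Submodule.span_le.2 ?_
      rintro z hz
      obtain ⟨_, ⟨w, hwW, rfl⟩, rfl⟩ := hz
      by_cases hwU : w ∈ U
      · rw [SetLike.mem_coe, hπU w hwU]
        exact zero_mem _
      · exact Submodule.subset_span
          ⟨⟨w, Finset.mem_sdiff.2 ⟨Finset.mem_coe.1 hwW, hwU⟩⟩, rfl⟩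
    have hcard : Fintype.card {y // y ∈ W \ U} = Module.finrank ℝ ((Fin d → ℝ) ⧸ A) := by
      rw [Fintype.card_coe, Finset.card_sdiff_of_subset hUW, hWcard, hUcard, hQrank]
      omega
    exact aux_simplex_functional (W \ U) x A hspan hcard
  choose F hF using hfun
  -- suppose, for contradiction, that q ≤ d - e
  by_contra hcon
  push_neg at hcon
  have hqle : q ≤ d - e := by omega
  have hcard𝒬 : Fintype.card {W' // W' ∈ 𝒬} ≤ Module.finrank ℝ ((Fin d → ℝ) ⧸ A) := by
    rw [Fintype.card_coe, hQrank, ← hq]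
    exact hqle
  have : Nonempty {W' // W' ∈ 𝒬} := ⟨⟨W₀, hW₀𝒬⟩⟩
  obtain ⟨v, hv0, hvle⟩ := aux_neg_vector F hcard𝒬
  obtain ⟨v', hv'⟩ := Submodule.mkQ_surjective A v
  -- find a simplex W containing x and x + t v'
  obtain ⟨δ, hδpos, hδ⟩ := Metric.mem_nhds_iff.1 (mem_interior_iff_mem_nhds.1 hxint)
  set Γbad := Γ.filter (fun W : Finset (Fin d → ℝ) => x ∉ convexHull ℝ (W : Set (Fin d → ℝ))) with hΓbad
  set K : Set (Fin d → ℝ) :=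
    ⋃ (W : Finset (Fin d → ℝ)) (_ : W ∈ Γbad), convexHull ℝ (W : Set (Fin d → ℝ)) with hKdef
  have hKclosed : IsClosed K :=
    isClosed_biUnion_finset fun W _ => (W.finite_toSet.isCompact_convexHull ℝ).isClosed
  have hxK : x ∉ K := by
    rw [hKdef]
    simp only [Set.mem_iUnion, not_exists]
    rintro W hW
    rw [hΓbad, Finset.mem_filter] at hW
    exact hW.2
  obtain ⟨ε, hεpos, hε⟩ := Metric.mem_nhds_iff.1 (hKclosed.isOpen_compl.mem_nhds hxK)
  set t : ℝ := min δ ε / (2 * (‖v'‖ + 1)) with htdef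
  have hnv : (0:ℝ) < ‖v'‖ + 1 := by positivity
  have ht : 0 < t := div_pos (lt_min hδpos hεpos) (by positivity)
  set y : Fin d → ℝ := x + t • v' with hydef
  have hyx : dist y x < min δ ε := by
    rw [dist_eq_norm]
    have h1 : y - x = t • v' := by rw [hydef]; abel
    rw [h1, norm_smul, Real.norm_eq_abs, abs_of_pos ht]
    have h2 : t * ‖v'‖ ≤ t * (‖v'‖ + 1) := by nlinarith [norm_nonneg v']
    have h3 : t * (‖v'‖ + 1) = min δ ε / 2 := by
      rw [htdef]; field_simp
    have h4 : min δ ε / 2 < min δ ε := by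
      have := lt_min hδpos hεpos; linarith
    linarith
  have hyP : y ∈ P := hδ (Metric.mem_ball.2 (lt_of_lt_of_le hyx (min_le_left _ _)))
  have hyK : y ∉ K := hε (Metric.mem_ball.2 (lt_of_lt_of_le hyx (min_le_right _ _)))
  obtain ⟨W, hWΓ, hyW⟩ : ∃ W ∈ Γ, y ∈ convexHull ℝ (W : Set (Fin d → ℝ)) := by
    rw [hunion] at hyP
    simpa using hyP
  have hxW : x ∈ convexHull ℝ (W : Set (Fin d → ℝ)) := by
    by_contra hxW
    exact hyK (Set.mem_iUnion₂.2 ⟨W, Finset.mem_filter.2 ⟨hWΓ, hxW⟩, hyW⟩)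
  -- U is a face of W, i.e. U ⊆ W
  obtain ⟨U'', hU''W, hU''W₀, hcap⟩ := hglue W hWΓ W₀ hW₀
  have hxW₀ : x ∈ convexHull ℝ (W₀ : Set (Fin d → ℝ)) :=
    convexHull_mono (Finset.coe_subset.2 hUW₀) hxU
  have hxU'' : x ∈ convexHull ℝ (U'' : Set (Fin d → ℝ)) := by
    rw [← hcap]; exact ⟨hxW, hxW₀⟩
  obtain ⟨β, hβ0, hβ1, hβx⟩ := hmem U'' x hxU''
  have hUU'' : U ⊆ U'' :=
    aux_face_subset hW₀ind hUW₀ hU''W₀ hαpos hα1 hβ0 hβ1 (by rw [← hxdef, hβx])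
  have hUW : U ⊆ W := hUU''.trans hU''W
  have hW𝒬 : W ∈ 𝒬 := Finset.mem_filter.2 ⟨hWΓ, hUW⟩
  -- coefficients of y in W
  obtain ⟨μ, hμ0, hμ1, hμy⟩ := hmem W y hyW
  have h5 : ∑ w ∈ W, μ w • (w - x) = t • v' := by
    have h51 : ∑ w ∈ W, μ w • (w - x) = (∑ w ∈ W, μ w • w) - (∑ w ∈ W, μ w) • x := by
      rw [Finset.sum_smul]
      rw [← Finset.sum_sub_distrib]
      exact Finset.sum_congr rfl fun w _ => by rw [smul_sub]
    rw [h51, hμ1, hμy, one_smul, hydef]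
    abel
  have h6 : ∑ w ∈ W, μ w • A.mkQ (w - x) = t • v := by
    have : ∑ w ∈ W, μ w • A.mkQ (w - x) = A.mkQ (∑ w ∈ W, μ w • (w - x)) := by
      rw [map_sum]
      exact Finset.sum_congr rfl fun w _ => by rw [map_smul]
    rw [this, h5, map_smul, hv']
  have h7 : ∑ w ∈ W \ U, μ w • A.mkQ (w - x) = t • v := by
    rw [← h6, ← Finset.sum_sdiff hUW]
    have : ∑ w ∈ U, μ w • A.mkQ (w - x) = 0 :=
      Finset.sum_eq_zero fun w hw => by rw [hπU w hw, smul_zero]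
    rw [this, add_zero]
  -- derive the contradiction
  have hfle : F ⟨W, hW𝒬⟩ (∑ w ∈ W \ U, μ w • A.mkQ (w - x)) ≤ 0 := by
    rw [h7, map_smul]
    have h1 := hvle ⟨W, hW𝒬⟩
    rw [smul_eq_mul]
    exact mul_nonpos_of_nonneg_of_nonpos (le_of_lt ht) h1
  have hzero := hF ⟨W, hW𝒬⟩ μ (fun w hw => hμ0 w (Finset.mem_sdiff.1 hw).1) hfle
  rw [h7] at hzero
  have : v = 0 := by
    rcases smul_eq_zero.1 hzero with h | h
    · exact absurd h (ne_of_gt ht)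
    · exact h
  exact hv0 this
end
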